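/- arXiv:1308.4901 — 3 statements merged into one kernel-verified Lean document; each statement's English description precedes it below -/
import Mathlib

section
/- Suppose Φ satisfies Assumption (A1) and γ² > 4 max_k Φ̂(k). Then the functions Â¹ and Â² belong to C¹([0,∞)×𝕋), and there exists c₀ > 0 such that for i = 1,2, all t ≥ 0 and all k: |Â^i_t(k)| ≤ c₀ e^{−δ₀ t}, |∂_t Â^i_t(k)| ≤ c₀ e^{−δ₀ t}, and |∂_k Â^i_t(k)| ≤ c₀ e^{−δ₀ t/2}, where δ₀ := ω₀²/γ. -/
open Real MeasureTheory Matrix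
open scoped BigOperators

noncomputable section

/-- Centered representative of an element of the cyclic lattice `Λ_L`. -/
def zrep (L : ℕ) (x : ZMod L) : ℤ :=
  if (x.val : ℤ) ≤ (L : ℤ) / 2 then (x.val : ℤ) else (x.val : ℤ) - (L : ℤ)

/-- Fourier transform of the (symmetric, real) interaction `Φ`. -/
def phiHat (Φ : ℤ → ℝ) (k : ℝ) : ℝ := ∑' x : ℤ, Φ x * Real.cos (2 * π * k * (x : ℝ))

/-- Assumption (A1): exponential decay, symmetry, and pinning with constant `ω₀`. -/
def AssumptionA1 (Φ : ℤ → ℝ) (ω₀ : ℝ) : Prop :=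
  (∃ C > (0:ℝ), ∃ δ > (0:ℝ), ∀ x : ℤ, |Φ x| ≤ C * Real.exp (-δ * |(x : ℝ)|)) ∧
  (∀ x : ℤ, Φ (-x) = Φ x) ∧ 0 < ω₀ ∧ ∀ k : ℝ, ω₀ ^ 2 ≤ phiHat Φ k

/-- `max_k Φ̂(k)`. -/
def supPhiHat (Φ : ℤ → ℝ) : ℝ := ⨆ k : ℝ, phiHat Φ k

def uFun (Φ : ℤ → ℝ) (γ k : ℝ) : ℝ := Real.sqrt ((γ / 2) ^ 2 - phiHat Φ k)
def muP (Φ : ℤ → ℝ) (γ k : ℝ) : ℝ := γ / 2 + uFun Φ γ k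
def muM (Φ : ℤ → ℝ) (γ k : ℝ) : ℝ := γ / 2 - uFun Φ γ k

/-- `Â¹_t(k)`. -/
def Ahat1 (Φ : ℤ → ℝ) (γ t k : ℝ) : ℝ :=
  phiHat Φ k * (Real.exp (-(t * muP Φ γ k)) - Real.exp (-(t * muM Φ γ k))) / (2 * uFun Φ γ k)

/-- `Â²_t(k)`. -/
def Ahat2 (Φ : ℤ → ℝ) (γ t k : ℝ) : ℝ :=
  (muP Φ γ k * Real.exp (-(t * muP Φ γ k)) - muM Φ γ k * Real.exp (-(t * muM Φ γ k)))
    / (2 * uFun Φ γ k)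

/-- Noise domination: `γ² > 4 max_k Φ̂(k)`. -/
def NoiseDom (Φ : ℤ → ℝ) (γ : ℝ) : Prop := 4 * supPhiHat Φ < γ ^ 2

/-- Nondegeneracy of the harmonic forces. -/
def NonDeg (Φ : ℤ → ℝ) (γ : ℝ) : Prop :=
  ∀ ε > (0:ℝ), ∃ Cε > (0:ℝ), ∀ k₀ : ℝ, ε ≤ |k₀| → |k₀| ≤ 1 / 2 →
    Cε ≤ ∫ t in Set.Ioi (0 : ℝ),
        ∫ k in (0:ℝ)..1, (Ahat2 Φ γ t (k + k₀ / 2) - Ahat2 Φ γ t (k - k₀ / 2)) ^ 2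

/-- Assumption (A2). -/
def AssumptionA2 (Φ : ℤ → ℝ) (γ : ℝ) : Prop := NoiseDom Φ γ ∧ NonDeg Φ γ

/-- A dual lattice point `k ∈ Λ_L* ⊂ (-1/2,1/2]`, as a real number. -/
def dualPt (L : ℕ) (κ : ZMod L) : ℝ := (zrep L κ : ℝ) / (L : ℝ)

/-- `A²_{t,x} = ∫_{Λ_L*} dk e^{i2πk·x} Â²_t(k)` (real, by symmetry of `Â²`). -/
def latA2 (Φ : ℤ → ℝ) (γ : ℝ) (L : ℕ) [NeZero L] (t : ℝ) (x : ZMod L) : ℝ :=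
  (L : ℝ)⁻¹ * ∑ κ : ZMod L,
    Real.cos (2 * π * dualPt L κ * (zrep L x : ℝ)) * Ahat2 Φ γ t (dualPt L κ)

/-- The memory kernel `p_{t,x} := 2γ (A²_{t,x})²`. -/
def pKer (Φ : ℤ → ℝ) (γ : ℝ) (L : ℕ) [NeZero L] (t : ℝ) (x : ZMod L) : ℝ :=
  2 * γ * (latA2 Φ γ L t x) ^ 2

/-- The periodized interaction matrix `Φ_L`. -/
def PhiL (Φ : ℤ → ℝ) (L : ℕ) : Matrix (ZMod L) (ZMod L) ℝ :=
  fun x' x => ∑' n : ℤ, Φ (zrep L (x' - x) + n * (L : ℤ))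

/-- `M_γ = [[0, Φ_L],[−1, γ·1]]` in block form. -/
def Mgam (Φ : ℤ → ℝ) (γ : ℝ) (L : ℕ) :
    Matrix (Fin 2 × ZMod L) (Fin 2 × ZMod L) ℝ :=
  fun p q =>
    if p.1 = 0 then (if q.1 = 0 then 0 else PhiL Φ L p.2 q.2)
    else (if q.1 = 0 then -(if p.2 = q.2 then 1 else 0)
          else γ * (if p.2 = q.2 then 1 else 0))

/-- `𝒢_L = diag(Φ_L, 1)`. -/
def GLmat (Φ : ℤ → ℝ) (L : ℕ) :
    Matrix (Fin 2 × ZMod L) (Fin 2 × ZMod L) ℝ :=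
  fun p q =>
    if p.1 = 0 then (if q.1 = 0 then PhiL Φ L p.2 q.2 else 0)
    else (if q.1 = 0 then 0 else (if p.2 = q.2 then 1 else 0))

/-- The translate `Γ_x` of the initial second-moment matrix. -/
def transMat (L : ℕ) (Γ : Matrix (Fin 2 × ZMod L) (Fin 2 × ZMod L) ℝ) (x : ZMod L) :
    Matrix (Fin 2 × ZMod L) (Fin 2 × ZMod L) ℝ :=
  fun p q => Γ (p.1, x + p.2) (q.1, x + q.2)

/-- The source term `g_{t,x} = (e^{−tM_γᵀ} Γ_x e^{−tM_γ})^{22}_{0,0}`. -/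
def gSrc (Φ : ℤ → ℝ) (γ : ℝ) (L : ℕ) [NeZero L]
    (Γ : Matrix (Fin 2 × ZMod L) (Fin 2 × ZMod L) ℝ) (t : ℝ) (x : ZMod L) : ℝ :=
  (NormedSpace.exp ((-t) • (Mgam Φ γ L)ᵀ) * transMat L Γ x *
    NormedSpace.exp ((-t) • Mgam Φ γ L)) (1, 0) (1, 0)

/-- Mean energy density `𝓔 = (2L)⁻¹ Tr(𝒢_L Γ)`. -/
def EDen (Φ : ℤ → ℝ) (L : ℕ) [NeZero L]
    (Γ : Matrix (Fin 2 × ZMod L) (Fin 2 × ZMod L) ℝ) : ℝ :=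
  (2 * (L : ℝ))⁻¹ * Matrix.trace (GLmat Φ L * Γ)

/-- `T` is a continuous solution of the renewal equation (extended by `0` to `t<0`). -/
def IsTempSol (Φ : ℤ → ℝ) (γ : ℝ) (L : ℕ) [NeZero L]
    (Γ : Matrix (Fin 2 × ZMod L) (Fin 2 × ZMod L) ℝ) (T : ℝ → ZMod L → ℝ) : Prop :=
  (∀ x, ContinuousOn (fun t => T t x) (Set.Ici 0)) ∧
  (∀ t < (0:ℝ), ∀ x, T t x = 0) ∧
  ∀ t ≥ (0:ℝ), ∀ x : ZMod L, T t x = gSrc Φ γ L Γ t x +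
    ∫ s in (0:ℝ)..t, ∑ y : ZMod L, pKer Φ γ L s y * T (t - s) (x - y)

/-- `p̃_x := (γ/2)∫₀^∞ p_{s,x} ds`. -/
def ptil (Φ : ℤ → ℝ) (γ : ℝ) (L : ℕ) [NeZero L] (x : ZMod L) : ℝ :=
  γ / 2 * ∫ s in Set.Ioi (0:ℝ), pKer Φ γ L s x

/-- The lattice diffusion operator `D`, as a matrix. -/
def Dmat (Φ : ℤ → ℝ) (γ : ℝ) (L : ℕ) [NeZero L] : Matrix (ZMod L) (ZMod L) ℝ :=
  fun x z => ∑ y : ZMod L, ptil Φ γ L y *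
    ((if z = x then 2 else 0) - (if z = x + y then 1 else 0) - (if z = x - y then 1 else 0))

/-- `κ_L := Σ_y y² p̃_y`. -/
def kappaL (Φ : ℤ → ℝ) (γ : ℝ) (L : ℕ) [NeZero L] : ℝ :=
  ∑ y : ZMod L, (zrep L y : ℝ) ^ 2 * ptil Φ γ L y


set_option linter.unusedSectionVars false
set_option maxHeartbeats 1000000
section Stmt3Aux




lemma sum_exp_aux {δ : ℝ} (hδ : 0 < δ) (n : ℕ) :
    Summable (fun x : ℤ => |(x:ℝ)|^n * Real.exp (-δ * |(x:ℝ)|)) := by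
  have hr : ‖Real.exp (-δ)‖ < 1 := by
    rw [Real.norm_eq_abs, abs_of_pos (Real.exp_pos _)]
    exact Real.exp_lt_one_iff.mpr (by linarith)
  have hs := summable_pow_mul_geometric_of_norm_lt_one (R := ℝ) n hr
  have key : ∀ m : ℕ, |((m:ℤ):ℝ)|^n * Real.exp (-δ * |((m:ℤ):ℝ)|)
      = (m:ℝ)^n * Real.exp (-δ) ^ m := by
    intro m
    rw [Int.cast_natCast, abs_of_nonneg (Nat.cast_nonneg m), ← Real.exp_nat_mul]
    ring_nf
  apply Summable.of_nat_of_neg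
  · exact hs.congr fun m => (key m).symm
  · refine hs.congr fun m => ?_
    rw [← key m]
    push_cast
    rw [abs_neg]


def phiHat' (Φ : ℤ → ℝ) (k : ℝ) : ℝ :=
  ∑' x : ℤ, Φ x * (-Real.sin (2 * π * k * (x:ℝ)) * (2 * π * (x:ℝ)))

lemma hasDerivAt_cos_term (Φ : ℤ → ℝ) (x : ℤ) (k : ℝ) :
    HasDerivAt (fun k' => Φ x * Real.cos (2 * π * k' * (x:ℝ)))
      (Φ x * (-Real.sin (2 * π * k * (x:ℝ)) * (2 * π * (x:ℝ)))) k := by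
  have hin : HasDerivAt (fun k' : ℝ => 2 * π * k' * (x:ℝ)) (2 * π * (x:ℝ)) k := by
    simpa using ((hasDerivAt_id k).const_mul (2*π)).mul_const (x:ℝ)
  exact ((Real.hasDerivAt_cos _).comp k hin).const_mul (Φ x)

section Phi
variable {Φ : ℤ → ℝ} {C δ : ℝ} (hC : 0 < C) (hδ : 0 < δ)
  (hb : ∀ x : ℤ, |Φ x| ≤ C * Real.exp (-δ * |(x:ℝ)|))

include hC hδ hb

lemma summable_abs_phi : Summable (fun x : ℤ => |Φ x|) := by
  refine Summable.of_nonneg_of_le (fun x => abs_nonneg _) hb ?_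
  simpa using (sum_exp_aux hδ 0).mul_left C

lemma summable_phi_term (k : ℝ) :
    Summable (fun x : ℤ => Φ x * Real.cos (2 * π * k * (x:ℝ))) := by
  refine Summable.of_abs (Summable.of_nonneg_of_le (fun x => abs_nonneg _) (fun x => ?_)
    (summable_abs_phi hC hδ hb))
  rw [abs_mul]
  exact mul_le_of_le_one_right (abs_nonneg _) (Real.abs_cos_le_one _)

lemma deriv_term_bound (x : ℤ) (k : ℝ) :
    ‖Φ x * (-Real.sin (2 * π * k * (x:ℝ)) * (2 * π * (x:ℝ)))‖
      ≤ 2 * π * C * (|(x:ℝ)|^1 * Real.exp (-δ * |(x:ℝ)|)) := by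
  have h1 : |(-Real.sin (2 * π * k * (x:ℝ)) * (2 * π * (x:ℝ)))| ≤ 2 * π * |(x:ℝ)| := by
    rw [abs_mul, abs_neg, abs_mul, abs_mul, abs_of_pos Real.pi_pos]
    have hs := Real.abs_sin_le_one (2 * π * k * (x:ℝ))
    have h2 : |(2:ℝ)| = 2 := by norm_num
    rw [h2]
    calc |Real.sin (2 * π * k * (x:ℝ))| * (2 * π * |(x:ℝ)|) ≤ 1 * (2 * π * |(x:ℝ)|) := by
          apply mul_le_mul_of_nonneg_right hs (by positivity)
      _ = 2 * π * |(x:ℝ)| := one_mul _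
  rw [Real.norm_eq_abs, abs_mul]
  calc |Φ x| * |(-Real.sin (2 * π * k * (x:ℝ)) * (2 * π * (x:ℝ)))|
      ≤ (C * Real.exp (-δ * |(x:ℝ)|)) * (2 * π * |(x:ℝ)|) :=
        mul_le_mul (hb x) h1 (abs_nonneg _) (by positivity)
    _ = 2 * π * C * (|(x:ℝ)|^1 * Real.exp (-δ * |(x:ℝ)|)) := by ring

lemma summable_vbound :
    Summable (fun x : ℤ => 2 * π * C * (|(x:ℝ)|^1 * Real.exp (-δ * |(x:ℝ)|))) :=
  (sum_exp_aux hδ 1).mul_left _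

lemma hasDerivAt_phiHat (k : ℝ) : HasDerivAt (phiHat Φ) (phiHat' Φ k) k :=
  hasDerivAt_tsum (summable_vbound hC hδ hb)
    (fun x k' => hasDerivAt_cos_term Φ x k')
    (fun x k' => deriv_term_bound hC hδ hb x k')
    (summable_phi_term hC hδ hb 0) k

lemma phiHat'_bound (k : ℝ) :
    |phiHat' Φ k| ≤ ∑' x : ℤ, 2 * π * C * (|(x:ℝ)|^1 * Real.exp (-δ * |(x:ℝ)|)) := by
  have hsum : Summable fun x : ℤ =>
      ‖Φ x * (-Real.sin (2 * π * k * (x:ℝ)) * (2 * π * (x:ℝ)))‖ :=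
    (summable_vbound hC hδ hb).of_nonneg_of_le (fun x => norm_nonneg _)
      (fun x => deriv_term_bound hC hδ hb x k)
  exact (norm_tsum_le_tsum_norm hsum).trans
    (Summable.tsum_le_tsum (fun x => deriv_term_bound hC hδ hb x k) hsum (summable_vbound hC hδ hb))

lemma continuous_phiHat' : Continuous (phiHat' Φ) := by
  unfold phiHat'
  exact continuous_tsum (fun x => by fun_prop) (summable_vbound hC hδ hb)
    (fun x k => deriv_term_bound hC hδ hb x k)

lemma phiHat_abs_le (k : ℝ) : |phiHat Φ k| ≤ ∑' x : ℤ, |Φ x| := by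
  have hsum : Summable fun x : ℤ => ‖Φ x * Real.cos (2 * π * k * (x:ℝ))‖ :=
    (summable_phi_term hC hδ hb k).abs
  refine (norm_tsum_le_tsum_norm hsum).trans
    (Summable.tsum_le_tsum (fun x => ?_) hsum (summable_abs_phi hC hδ hb))
  rw [Real.norm_eq_abs, abs_mul]
  exact mul_le_of_le_one_right (abs_nonneg _) (Real.abs_cos_le_one _)

end Phi



lemma lin_exp_bound {ε t : ℝ} (hε : 0 < ε) (ht : 0 ≤ t) :
    (1 + t) * Real.exp (-(ε * t)) ≤ 1 + 1 / ε := by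
  have h1 : Real.exp (-(ε * t)) ≤ 1 := Real.exp_le_one_iff.mpr (by nlinarith)
  have h2 : t * Real.exp (-(ε * t)) ≤ 1 / ε := by
    have hkey : ε * t ≤ Real.exp (ε * t) := by nlinarith [Real.add_one_le_exp (ε * t)]
    have hmul : Real.exp (-(ε * t)) * Real.exp (ε * t) = 1 := by
      rw [← Real.exp_add]; simp
    have hep : 0 < Real.exp (ε * t) := Real.exp_pos _
    have hen : 0 < Real.exp (-(ε * t)) := Real.exp_pos _
    rw [le_div_iff₀ hε]
    calc t * Real.exp (-(ε * t)) * ε = (ε * t) * Real.exp (-(ε * t)) := by ring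
      _ ≤ Real.exp (ε * t) * Real.exp (-(ε * t)) := by nlinarith
      _ = 1 := by rw [mul_comm]; exact hmul
  nlinarith [Real.exp_pos (-(ε * t))]

lemma decay_bound {δ₀ δ₁ t : ℝ} (h0 : 0 < δ₀) (h01 : δ₀ < δ₁) (ht : 0 ≤ t) :
    (1 + t) * Real.exp (-(t * δ₁)) ≤ (1 + 1 / (δ₁ - δ₀)) * Real.exp (-(δ₀ * t)) := by
  have hε : 0 < δ₁ - δ₀ := by linarith
  have hsplit : Real.exp (-(t * δ₁)) = Real.exp (-((δ₁ - δ₀) * t)) * Real.exp (-(δ₀ * t)) := by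
    rw [← Real.exp_add]; ring_nf
  rw [hsplit, ← mul_assoc]
  have := lin_exp_bound hε ht
  have he : 0 ≤ Real.exp (-(δ₀ * t)) := le_of_lt (Real.exp_pos _)
  exact mul_le_mul_of_nonneg_right this he

lemma exp_diff_bound {b u t : ℝ} (hu : 0 < u) (ht : 0 ≤ t) :
    |Real.exp (-(t * (b + 2 * u))) - Real.exp (-(t * b))| ≤
      2 * t * u * Real.exp (-(t * b)) := by
  set e2 := Real.exp (-(t * b)) with he2
  have hsplit : Real.exp (-(t * (b + 2 * u))) = e2 * Real.exp (-(t * (2 * u))) := by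
    rw [he2, ← Real.exp_add]; ring_nf
  have hz : 0 ≤ t * (2 * u) := by positivity
  have h1 : 1 - Real.exp (-(t * (2 * u))) ≤ t * (2 * u) := by
    nlinarith [Real.add_one_le_exp (-(t * (2 * u)))]
  have hle : Real.exp (-(t * (2 * u))) ≤ 1 := Real.exp_le_one_iff.mpr (by linarith)
  have he2p : 0 < e2 := Real.exp_pos _
  rw [hsplit, abs_sub_comm]
  rw [abs_of_nonneg (by nlinarith)]
  nlinarith

lemma frac_bound1 {p e1 e2 u S t : ℝ} (hu : 0 < u) (hp : |p| ≤ S)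
    (hd : |e1 - e2| ≤ 2 * t * u * e2) :
    |p * (e1 - e2) / (2 * u)| ≤ S * (t * e2) := by
  rw [abs_div, abs_mul, abs_of_pos (by linarith : (0:ℝ) < 2 * u), div_le_iff₀ (by linarith)]
  calc |p| * |e1 - e2| ≤ S * (2 * t * u * e2) :=
        mul_le_mul hp hd (abs_nonneg _) ((abs_nonneg _).trans hp)
    _ = S * (t * e2) * (2 * u) := by ring

lemma frac_bound2 {a b u e1 e2 γ t : ℝ} (hu : 0 < u) (hab : a = b + 2 * u)
    (hb0 : 0 ≤ b) (hbγ : b ≤ γ) (h2u : 2 * u ≤ γ) (he1 : 0 ≤ e1) (he12 : e1 ≤ e2)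
    (hd : |e1 - e2| ≤ 2 * t * u * e2) (ht : 0 ≤ t) :
    |(a * e1 - b * e2) / (2 * u)| ≤ (1 + γ * t) * e2 := by
  have hkey : a * e1 - b * e2 = 2 * u * e1 + b * (e1 - e2) := by rw [hab]; ring
  have he2 : 0 ≤ e2 := he1.trans he12
  rw [hkey, abs_div, abs_of_pos (by linarith : (0:ℝ) < 2 * u), div_le_iff₀ (by linarith)]
  calc |2 * u * e1 + b * (e1 - e2)| ≤ |2 * u * e1| + |b * (e1 - e2)| := abs_add_le _ _
    _ = 2 * u * e1 + b * |e1 - e2| := by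
        rw [abs_mul b (e1 - e2), abs_of_nonneg hb0,
          abs_of_nonneg (by positivity : (0:ℝ) ≤ 2 * u * e1)]
    _ ≤ 2 * u * e2 + γ * (2 * t * u * e2) := by
        have h1 : 2 * u * e1 ≤ 2 * u * e2 := by nlinarith
        have h2 : b * |e1 - e2| ≤ γ * (2 * t * u * e2) := by
          have := abs_nonneg (e1 - e2)
          nlinarith
        linarith
    _ = (1 + γ * t) * e2 * (2 * u) := by ring

lemma frac_bound4 {a b u e1 e2 γ t : ℝ} (hu : 0 < u) (hab : a = b + 2 * u)
    (habγ : a + b = γ) (hb0 : 0 ≤ b) (hbγ : b ≤ γ) (he1 : 0 ≤ e1) (he12 : e1 ≤ e2)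
    (hd : |e1 - e2| ≤ 2 * t * u * e2) (ht : 0 ≤ t) :
    |(a ^ 2 * e1 - b ^ 2 * e2) / (2 * u)| ≤ (γ + γ ^ 2 * t) * e2 := by
  have hγ0 : 0 ≤ γ := by nlinarith
  have hkey : a ^ 2 * e1 - b ^ 2 * e2 = 2 * γ * u * e1 + b ^ 2 * (e1 - e2) := by
    have : a ^ 2 - b ^ 2 = 2 * γ * u := by nlinarith
    nlinarith [this]
  have he2 : 0 ≤ e2 := he1.trans he12
  rw [hkey, abs_div, abs_of_pos (by linarith : (0:ℝ) < 2 * u), div_le_iff₀ (by linarith)]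
  calc |2 * γ * u * e1 + b ^ 2 * (e1 - e2)| ≤ |2 * γ * u * e1| + |b ^ 2 * (e1 - e2)| := abs_add_le _ _
    _ = 2 * γ * u * e1 + b ^ 2 * |e1 - e2| := by
        rw [abs_mul (b ^ 2) (e1 - e2), abs_of_nonneg (sq_nonneg b),
          abs_of_nonneg (by positivity : (0:ℝ) ≤ 2 * γ * u * e1)]
    _ ≤ 2 * γ * u * e2 + γ ^ 2 * (2 * t * u * e2) := by
        have h1 : 2 * γ * u * e1 ≤ 2 * γ * u * e2 := by nlinarith [mul_nonneg hγ0 hu.le]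
        have h2 : b ^ 2 * |e1 - e2| ≤ γ ^ 2 * (2 * t * u * e2) := by
          have h3 := abs_nonneg (e1 - e2)
          have h4 : b ^ 2 ≤ γ ^ 2 := by nlinarith
          nlinarith
        linarith
    _ = (γ + γ ^ 2 * t) * e2 * (2 * u) := by ring

lemma div_bound_aux {N' N D D' c₁ c₂ c₃ c₄ w e : ℝ} (he : 0 ≤ e)
    (hN' : |N'| ≤ c₁ * e) (hN : |N| ≤ c₂ * e) (hD : |D| ≤ c₃) (hD' : |D'| ≤ c₄)
    (hw : 0 < w) (hDsq : w ≤ D ^ 2) :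
    |(N' * D - N * D') / D ^ 2| ≤ ((c₁ * c₃ + c₂ * c₄) / w) * e := by
  have hc₃ : 0 ≤ c₃ := (abs_nonneg _).trans hD
  have hc₄ : 0 ≤ c₄ := (abs_nonneg _).trans hD'
  have hc₁ : 0 ≤ c₁ * e := (abs_nonneg _).trans hN'
  have hc₂ : 0 ≤ c₂ * e := (abs_nonneg _).trans hN
  have h1 : |N' * D - N * D'| ≤ (c₁ * c₃ + c₂ * c₄) * e := by
    calc |N' * D - N * D'| ≤ |N' * D| + |N * D'| := abs_sub _ _
      _ = |N'| * |D| + |N| * |D'| := by rw [abs_mul, abs_mul]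
      _ ≤ (c₁ * e) * c₃ + (c₂ * e) * c₄ :=
          add_le_add (mul_le_mul hN' hD (abs_nonneg _) hc₁)
            (mul_le_mul hN hD' (abs_nonneg _) hc₂)
      _ = (c₁ * c₃ + c₂ * c₄) * e := by ring
  rw [abs_div, abs_of_nonneg (sq_nonneg D)]
  have hnum : (0:ℝ) ≤ (c₁ * c₃ + c₂ * c₄) * e := by
    have : 0 ≤ c₁ * e * c₃ + c₂ * e * c₄ := by positivity
    nlinarith
  calc |N' * D - N * D'| / D ^ 2 ≤ ((c₁ * c₃ + c₂ * c₄) * e) / w :=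
      div_le_div₀ hnum h1 hw hDsq
    _ = ((c₁ * c₃ + c₂ * c₄) / w) * e := by ring




lemma Nk_bound {p' p eP eM u w t M S U γ : ℝ} (ht : 0 ≤ t) (hp' : |p'| ≤ M) (hp : |p| ≤ S)
    (hw : |w| ≤ U) (hu : 0 < u) (h2u : 2 * u ≤ γ) (heP0 : 0 ≤ eP) (hePM : eP ≤ eM)
    (hd : |eP - eM| ≤ 2 * t * u * eM) :
    |p' * (eP - eM) + p * (eP * -(t * w) - eM * -(t * -w))| ≤
      (M * γ + 2 * S * U) * ((1 + t) * eM) := by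
  have hM0 : 0 ≤ M := (abs_nonneg _).trans hp'
  have hS0 : 0 ≤ S := (abs_nonneg _).trans hp
  have hU0 : 0 ≤ U := (abs_nonneg _).trans hw
  have heM0 : 0 ≤ eM := heP0.trans hePM
  have h1 : |p' * (eP - eM)| ≤ M * (2 * t * u * eM) := by
    rw [abs_mul]; exact mul_le_mul hp' hd (abs_nonneg _) hM0
  have hin : eP * -(t * w) - eM * -(t * -w) = -(t * w) * (eP + eM) := by ring
  have h2 : |p * (eP * -(t * w) - eM * -(t * -w))| ≤ S * (t * U * (2 * eM)) := by
    rw [hin, abs_mul, abs_mul, abs_neg, abs_mul, abs_of_nonneg ht,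
      abs_of_nonneg (by linarith : (0:ℝ) ≤ eP + eM)]
    have hbb : t * |w| * (eP + eM) ≤ t * U * (2 * eM) := by
      have hx : |w| * (eP + eM) ≤ U * (2 * eM) :=
        mul_le_mul hw (by linarith) (by linarith) hU0
      calc t * |w| * (eP + eM) = t * (|w| * (eP + eM)) := by ring
        _ ≤ t * (U * (2 * eM)) := mul_le_mul_of_nonneg_left hx ht
        _ = t * U * (2 * eM) := by ring
    exact mul_le_mul hp hbb (by positivity) hS0
  calc |p' * (eP - eM) + p * (eP * -(t * w) - eM * -(t * -w))|
      ≤ |p' * (eP - eM)| + |p * (eP * -(t * w) - eM * -(t * -w))| := abs_add_le _ _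
    _ ≤ M * (2 * t * u * eM) + S * (t * U * (2 * eM)) := add_le_add h1 h2
    _ ≤ (M * γ + 2 * S * U) * ((1 + t) * eM) := by
        have hγ0 : (0:ℝ) ≤ γ := by nlinarith
        nlinarith [mul_nonneg (mul_nonneg hM0 hγ0) heM0,
          mul_nonneg hS0 (mul_nonneg hU0 heM0),
          mul_nonneg (mul_nonneg hM0 ht) heM0,
          mul_nonneg (mul_nonneg hM0 (mul_nonneg ht heM0)) (by linarith : (0:ℝ) ≤ γ - 2 * u),
          mul_nonneg hS0 (mul_nonneg hU0 (mul_nonneg ht heM0))]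

lemma N_bound {p eP eM u t S γ : ℝ} (ht : 0 ≤ t) (hp : |p| ≤ S) (hu : 0 < u)
    (h2u : 2 * u ≤ γ) (heP0 : 0 ≤ eP) (hePM : eP ≤ eM)
    (hd : |eP - eM| ≤ 2 * t * u * eM) :
    |p * (eP - eM)| ≤ S * γ * ((1 + t) * eM) := by
  have hS0 : 0 ≤ S := (abs_nonneg _).trans hp
  have heM0 : 0 ≤ eM := heP0.trans hePM
  have h1 : |p * (eP - eM)| ≤ S * (2 * t * u * eM) := by
    rw [abs_mul]; exact mul_le_mul hp hd (abs_nonneg _) hS0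
  nlinarith [mul_nonneg (mul_nonneg hS0 ht) heM0, mul_nonneg hS0 heM0, mul_nonneg (mul_nonneg hS0 (by linarith : (0:ℝ) ≤ γ)) heM0]

lemma N2k_bound {a b eP eM w t U γ : ℝ} (ht : 0 ≤ t) (hw : |w| ≤ U)
    (ha0 : 0 ≤ a) (haγ : a ≤ γ) (hb0 : 0 ≤ b) (hbγ : b ≤ γ)
    (heP0 : 0 ≤ eP) (hePM : eP ≤ eM) :
    |w * eP + a * (eP * -(t * w)) - (-w * eM + b * (eM * -(t * -w)))| ≤
      (2 * U + 2 * U * γ) * ((1 + t) * eM) := by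
  have hU0 : 0 ≤ U := (abs_nonneg _).trans hw
  have heM0 : 0 ≤ eM := heP0.trans hePM
  have hin : w * eP + a * (eP * -(t * w)) - (-w * eM + b * (eM * -(t * -w)))
      = w * (eP + eM) - (t * w) * (a * eP + b * eM) := by ring
  rw [hin]
  have h1 : |w * (eP + eM)| ≤ U * (2 * eM) := by
    rw [abs_mul, abs_of_nonneg (by linarith : (0:ℝ) ≤ eP + eM)]
    nlinarith [abs_nonneg w]
  have h2 : |(t * w) * (a * eP + b * eM)| ≤ (t * U) * (2 * γ * eM) := by
    rw [abs_mul, abs_mul, abs_of_nonneg ht,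
      abs_of_nonneg (by positivity : (0:ℝ) ≤ a * eP + b * eM)]
    have hx : a * eP + b * eM ≤ 2 * γ * eM := by nlinarith
    exact mul_le_mul (by nlinarith [abs_nonneg w]) hx (by positivity) (by positivity)
  calc |w * (eP + eM) - (t * w) * (a * eP + b * eM)|
      ≤ |w * (eP + eM)| + |(t * w) * (a * eP + b * eM)| := abs_sub _ _
    _ ≤ U * (2 * eM) + (t * U) * (2 * γ * eM) := add_le_add h1 h2
    _ ≤ (2 * U + 2 * U * γ) * ((1 + t) * eM) := by nlinarith [mul_nonneg hU0 heM0, mul_nonneg (mul_nonneg hU0 (by linarith : (0:ℝ) ≤ γ)) heM0, mul_nonneg (mul_nonneg hU0 ht) heM0]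

lemma N2_bound {a b eP eM t γ : ℝ} (ht : 0 ≤ t)
    (ha0 : 0 ≤ a) (haγ : a ≤ γ) (hb0 : 0 ≤ b) (hbγ : b ≤ γ)
    (heP0 : 0 ≤ eP) (hePM : eP ≤ eM) :
    |a * eP - b * eM| ≤ 2 * γ * ((1 + t) * eM) := by
  have heM0 : 0 ≤ eM := heP0.trans hePM
  have h1 : |a * eP - b * eM| ≤ a * eP + b * eM := by
    have h := abs_sub (a * eP) (b * eM)
    rwa [abs_of_nonneg (mul_nonneg ha0 heP0), abs_of_nonneg (mul_nonneg hb0 heM0)] at h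
  have hγ0 : 0 ≤ γ := ha0.trans haγ
  nlinarith [mul_nonneg (mul_nonneg hγ0 ht) heM0, mul_nonneg hγ0 heM0]



end Stmt3Aux

/-- regularity and exponential bounds for `Â¹` and `Â²` (Lemma 4.4, items 1–2). -/
theorem stmt3 (Φ : ℤ → ℝ) (ω₀ γ : ℝ) (hA1 : AssumptionA1 Φ ω₀) (hγ : 0 < γ)
    (hdom : 4 * supPhiHat Φ < γ ^ 2) :
    ContDiffOn ℝ 1 (fun q : ℝ × ℝ => Ahat1 Φ γ q.1 q.2) (Set.Ici 0 ×ˢ Set.univ) ∧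
    ContDiffOn ℝ 1 (fun q : ℝ × ℝ => Ahat2 Φ γ q.1 q.2) (Set.Ici 0 ×ˢ Set.univ) ∧
    ∃ c₀ > (0:ℝ), ∀ t ≥ (0:ℝ), ∀ k : ℝ,
      (|Ahat1 Φ γ t k| ≤ c₀ * Real.exp (-(ω₀ ^ 2 / γ) * t) ∧
        |Ahat2 Φ γ t k| ≤ c₀ * Real.exp (-(ω₀ ^ 2 / γ) * t)) ∧
      (|deriv (fun s => Ahat1 Φ γ s k) t| ≤ c₀ * Real.exp (-(ω₀ ^ 2 / γ) * t) ∧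
        |deriv (fun s => Ahat2 Φ γ s k) t| ≤ c₀ * Real.exp (-(ω₀ ^ 2 / γ) * t)) ∧
      (|deriv (fun k' => Ahat1 Φ γ t k') k| ≤ c₀ * Real.exp (-(ω₀ ^ 2 / γ) * t / 2) ∧
        |deriv (fun k' => Ahat2 Φ γ t k') k| ≤ c₀ * Real.exp (-(ω₀ ^ 2 / γ) * t / 2)) := by
  classical
  obtain ⟨⟨C, hC, δ, hδ, hb⟩, -, hω₀, hpin⟩ := hA1
  obtain ⟨Sb, hSbdef⟩ : ∃ x : ℝ, x = ∑' x : ℤ, |Φ x| := ⟨_, rfl⟩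
  have hSb : ∀ k : ℝ, |phiHat Φ k| ≤ Sb := by
    rw [hSbdef]; exact fun k => phiHat_abs_le hC hδ hb k
  have hSb0 : 0 ≤ Sb := (abs_nonneg _).trans (hSb 0)
  obtain ⟨M, hMdef⟩ : ∃ x : ℝ, x = ∑' x : ℤ, 2 * π * C * (|(x:ℝ)| ^ 1 * Real.exp (-δ * |(x:ℝ)|)) :=
    ⟨_, rfl⟩
  have hM : ∀ k : ℝ, |phiHat' Φ k| ≤ M := by
    rw [hMdef]; exact fun k => phiHat'_bound hC hδ hb k
  have hM0 : 0 ≤ M := (abs_nonneg _).trans (hM 0)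
  have hP' : ∀ k : ℝ, HasDerivAt (phiHat Φ) (phiHat' Φ k) k := hasDerivAt_phiHat hC hδ hb
  have hω2 : 0 < ω₀ ^ 2 := by positivity
  have hbdd : BddAbove (Set.range (phiHat Φ)) :=
    ⟨Sb, by rintro y ⟨k, rfl⟩; exact (le_abs_self _).trans (hSb k)⟩
  have hsup : ∀ k : ℝ, phiHat Φ k ≤ supPhiHat Φ := fun k => le_ciSup hbdd k
  have hsup_lt : supPhiHat Φ < (γ / 2) ^ 2 := by
    have hsq : (γ / 2) ^ 2 = γ ^ 2 / 4 := by ring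
    linarith only [hdom, hsq]
  have hPlt : ∀ k : ℝ, phiHat Φ k < (γ / 2) ^ 2 := fun k => lt_of_le_of_lt (hsup k) hsup_lt
  have hpos : ∀ k : ℝ, 0 < (γ / 2) ^ 2 - phiHat Φ k := fun k => by linarith only [hPlt k]
  have hu_sq : ∀ k : ℝ, uFun Φ γ k ^ 2 = (γ / 2) ^ 2 - phiHat Φ k := fun k =>
    Real.sq_sqrt (hpos k).le
  have hu_pos : ∀ k : ℝ, 0 < uFun Φ γ k := fun k => Real.sqrt_pos.mpr (hpos k)
  obtain ⟨umin, huminDef⟩ : ∃ x : ℝ, x = Real.sqrt ((γ / 2) ^ 2 - supPhiHat Φ) := ⟨_, rfl⟩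
  have humin : 0 < umin := by rw [huminDef]; exact Real.sqrt_pos.mpr (by linarith only [hsup_lt])
  have hu_ge : ∀ k : ℝ, umin ≤ uFun Φ γ k := by
    rw [huminDef]
    exact fun k => Real.sqrt_le_sqrt (by linarith only [hsup k])
  obtain ⟨umax, humaxDef⟩ : ∃ x : ℝ, x = Real.sqrt ((γ / 2) ^ 2 - ω₀ ^ 2) := ⟨_, rfl⟩
  have hu_le : ∀ k : ℝ, uFun Φ γ k ≤ umax := by
    rw [humaxDef]; exact fun k => Real.sqrt_le_sqrt (by linarith only [hpin k])
  have hγ2 : (0:ℝ) < γ / 2 := by linarith only [hγ]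
  have humax0 : 0 ≤ umax := by rw [humaxDef]; exact Real.sqrt_nonneg _
  have humax_lt : umax < γ / 2 := by
    rw [humaxDef]
    exact (Real.sqrt_lt' hγ2).mpr (by linarith only [hω2])
  have hu_ltγ : ∀ k : ℝ, uFun Φ γ k < γ / 2 := fun k => lt_of_le_of_lt (hu_le k) humax_lt
  have hmM_pos : ∀ k : ℝ, 0 < muM Φ γ k := fun k => by
    unfold muM; linarith only [hu_ltγ k]
  have hmP_pos : ∀ k : ℝ, 0 < muP Φ γ k := fun k => by
    unfold muP; linarith only [hu_pos k, hγ2]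
  have hmM_leγ : ∀ k : ℝ, muM Φ γ k ≤ γ := fun k => by
    unfold muM; linarith only [hu_pos k, hγ2]
  have hmP_leγ : ∀ k : ℝ, muP Φ γ k ≤ γ := fun k => by
    unfold muP; linarith only [hu_ltγ k]
  have hmPM : ∀ k : ℝ, muP Φ γ k = muM Φ γ k + 2 * uFun Φ γ k := fun k => by
    unfold muP muM; ring
  have hmsum : ∀ k : ℝ, muP Φ γ k + muM Φ γ k = γ := fun k => by
    unfold muP muM; ring
  obtain ⟨δ₁, hδ₁def⟩ : ∃ x : ℝ, x = ω₀ ^ 2 / (γ / 2 + umax) := ⟨_, rfl⟩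
  have hδ₁pos : 0 < δ₁ := by rw [hδ₁def]; exact div_pos hω2 (by linarith only [hγ2, humax0])
  have hδ₀pos : 0 < ω₀ ^ 2 / γ := div_pos hω2 hγ
  have hδ₀lt : ω₀ ^ 2 / γ < δ₁ := by
    rw [hδ₁def]
    exact div_lt_div_of_pos_left hω2 (by linarith only [hγ2, humax0]) (by linarith only [humax_lt])
  have hmM_ge : ∀ k : ℝ, δ₁ ≤ muM Φ γ k := by
    intro k
    have hprod : muM Φ γ k * muP Φ γ k = phiHat Φ k := by
      unfold muM muP; linear_combination -(hu_sq k)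
    have heq : muM Φ γ k = phiHat Φ k / muP Φ γ k := by
      rw [eq_div_iff (hmP_pos k).ne']; exact hprod
    rw [heq, hδ₁def]
    exact div_le_div₀ (by linarith only [hpin k, hω2]) (hpin k) (hmP_pos k)
      (by unfold muP; linarith only [hu_le k])
  -- ContDiff part
  have hPcont' : Continuous (phiHat' Φ) := continuous_phiHat' hC hδ hb
  have hPcd : ContDiff ℝ 1 (phiHat Φ) := by
    rw [contDiff_one_iff_deriv]
    refine ⟨fun k => (hP' k).differentiableAt, ?_⟩
    have hderiv : deriv (phiHat Φ) = phiHat' Φ := funext fun k => (hP' k).deriv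
    rw [hderiv]; exact hPcont'
  have hucd : ContDiff ℝ 1 (uFun Φ γ) := by
    unfold uFun
    exact (contDiff_const.sub hPcd).sqrt fun k => (hpos k).ne'
  have hmPcd : ContDiff ℝ 1 (muP Φ γ) := by
    unfold muP; exact contDiff_const.add hucd
  have hmMcd : ContDiff ℝ 1 (muM Φ γ) := by
    unfold muM; exact contDiff_const.sub hucd
  have hePcd : ContDiff ℝ 1 (fun q : ℝ × ℝ => Real.exp (-(q.1 * muP Φ γ q.2))) :=
    ((contDiff_fst.mul (hmPcd.comp contDiff_snd)).neg).exp
  have heMcd : ContDiff ℝ 1 (fun q : ℝ × ℝ => Real.exp (-(q.1 * muM Φ γ q.2))) :=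
    ((contDiff_fst.mul (hmMcd.comp contDiff_snd)).neg).exp
  have hden : ∀ q : ℝ × ℝ, 2 * uFun Φ γ q.2 ≠ 0 := fun q =>
    ne_of_gt (by linarith only [hu_pos q.2])
  have hA1cd : ContDiff ℝ 1 (fun q : ℝ × ℝ => Ahat1 Φ γ q.1 q.2) := by
    unfold Ahat1
    exact ((hPcd.comp contDiff_snd).mul (hePcd.sub heMcd)).div
      (contDiff_const.mul (hucd.comp contDiff_snd)) hden
  have hA2cd : ContDiff ℝ 1 (fun q : ℝ × ℝ => Ahat2 Φ γ q.1 q.2) := by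
    unfold Ahat2
    exact (((hmPcd.comp contDiff_snd).mul hePcd).sub
      ((hmMcd.comp contDiff_snd).mul heMcd)).div
      (contDiff_const.mul (hucd.comp contDiff_snd)) hden
  refine ⟨hA1cd.contDiffOn, hA2cd.contDiffOn, ?_⟩
  -- constants
  have hγ0 : (0:ℝ) ≤ γ := hγ.le
  obtain ⟨U, hUdef⟩ : ∃ x : ℝ, x = M / (2 * umin) := ⟨_, rfl⟩
  have hU0 : 0 ≤ U := by rw [hUdef]; exact div_nonneg hM0 (by linarith only [humin])
  obtain ⟨K5, hK5def⟩ : ∃ x : ℝ,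
      x = ((M * γ + 2 * Sb * U) * γ + Sb * γ * (2 * U)) / (4 * umin ^ 2) := ⟨_, rfl⟩
  obtain ⟨K6, hK6def⟩ : ∃ x : ℝ,
      x = ((2 * U + 2 * U * γ) * γ + 2 * γ * (2 * U)) / (4 * umin ^ 2) := ⟨_, rfl⟩
  have hnum5 : 0 ≤ (M * γ + 2 * Sb * U) * γ + Sb * γ * (2 * U) := by
    have h1 : 0 ≤ M * γ := mul_nonneg hM0 hγ0
    have h2 : 0 ≤ 2 * Sb * U := mul_nonneg (by linarith only [hSb0]) hU0
    have h3 : 0 ≤ (M * γ + 2 * Sb * U) * γ := mul_nonneg (by linarith only [h1, h2]) hγ0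
    have h4 : 0 ≤ Sb * γ * (2 * U) := mul_nonneg (mul_nonneg hSb0 hγ0) (by linarith only [hU0])
    linarith only [h3, h4]
  have hnum6 : 0 ≤ (2 * U + 2 * U * γ) * γ + 2 * γ * (2 * U) := by
    have h1 : 0 ≤ 2 * U * γ := mul_nonneg (by linarith only [hU0]) hγ0
    have h2 : 0 ≤ (2 * U + 2 * U * γ) * γ := mul_nonneg (by linarith only [hU0, h1]) hγ0
    have h3 : 0 ≤ 2 * γ * (2 * U) := mul_nonneg (by linarith only [hγ0]) (by linarith only [hU0])
    linarith only [h2, h3]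
  have humin2 : (0:ℝ) < 4 * umin ^ 2 := by
    have hps := pow_pos humin 2; linarith only [hps]
  have hK50 : 0 ≤ K5 := by rw [hK5def]; exact div_nonneg hnum5 humin2.le
  have hK60 : 0 ≤ K6 := by rw [hK6def]; exact div_nonneg hnum6 humin2.le
  obtain ⟨Ktot, hKtdef⟩ : ∃ x : ℝ,
      x = Sb + (1 + γ) + Sb * (1 + γ) + (γ + γ ^ 2) + K5 + K6 + 1 := ⟨_, rfl⟩
  have hx1 : 0 ≤ Sb * (1 + γ) := mul_nonneg hSb0 (by linarith)
  have hx2 : 0 ≤ γ + γ ^ 2 := add_nonneg hγ0 (sq_nonneg γ)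
  have hKt0 : 0 < Ktot := by rw [hKtdef]; linarith only [hSb0, hγ0, hx1, hx2, hK50, hK60]
  have hεpos : 0 < δ₁ - ω₀ ^ 2 / γ := by linarith only [hδ₀lt]
  obtain ⟨Cd, hCddef⟩ : ∃ x : ℝ, x = 1 + 1 / (δ₁ - ω₀ ^ 2 / γ) := ⟨_, rfl⟩
  have hCd0 : 0 < Cd := by
    rw [hCddef]
    have hod := one_div_pos.mpr hεpos
    linarith only [hod]
  refine ⟨Ktot * Cd, mul_pos hKt0 hCd0, ?_⟩
  intro t ht k
  -- abbreviations (opaque)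
  obtain ⟨u, hudef⟩ : ∃ x : ℝ, x = uFun Φ γ k := ⟨_, rfl⟩
  obtain ⟨a, hadef⟩ : ∃ x : ℝ, x = muP Φ γ k := ⟨_, rfl⟩
  obtain ⟨bb, hbbdef⟩ : ∃ x : ℝ, x = muM Φ γ k := ⟨_, rfl⟩
  obtain ⟨p, hpdef⟩ : ∃ x : ℝ, x = phiHat Φ k := ⟨_, rfl⟩
  obtain ⟨p', hp'def⟩ : ∃ x : ℝ, x = phiHat' Φ k := ⟨_, rfl⟩
  obtain ⟨eP, hePdef⟩ : ∃ x : ℝ, x = Real.exp (-(t * a)) := ⟨_, rfl⟩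
  obtain ⟨eM, heMdef⟩ : ∃ x : ℝ, x = Real.exp (-(t * bb)) := ⟨_, rfl⟩
  have hup : 0 < u := by rw [hudef]; exact hu_pos k
  have hab : a = bb + 2 * u := by rw [hadef, hbbdef, hudef]; exact hmPM k
  have habγ : a + bb = γ := by rw [hadef, hbbdef]; exact hmsum k
  have hb0 : 0 ≤ bb := by rw [hbbdef]; exact (hmM_pos k).le
  have hbγ : bb ≤ γ := by rw [hbbdef]; exact hmM_leγ k
  have ha0 : 0 ≤ a := by rw [hadef]; exact (hmP_pos k).le
  have haγ : a ≤ γ := by rw [hadef]; exact hmP_leγ k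
  have h2uγ : 2 * u ≤ γ := by rw [hudef]; linarith only [hu_ltγ k]
  have heP0 : 0 ≤ eP := by rw [hePdef]; exact (Real.exp_pos _).le
  have heM0 : 0 ≤ eM := by rw [heMdef]; exact (Real.exp_pos _).le
  have hePM : eP ≤ eM := by
    rw [hePdef, heMdef]
    have hba : t * bb ≤ t * a := mul_le_mul_of_nonneg_left (by linarith only [hab, hup]) ht
    exact Real.exp_le_exp.mpr (by linarith only [hba])
  have hd : |eP - eM| ≤ 2 * t * u * eM := by
    rw [hePdef, heMdef, hab]
    exact exp_diff_bound hup ht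
  have heM1 : eM ≤ Real.exp (-(t * δ₁)) := by
    rw [heMdef]
    have hbm : δ₁ ≤ bb := by rw [hbbdef]; exact hmM_ge k
    have hba : t * δ₁ ≤ t * bb := mul_le_mul_of_nonneg_left hbm ht
    exact Real.exp_le_exp.mpr (by linarith only [hba])
  -- tail estimates
  have tail : ∀ K q : ℝ, K ≤ Ktot → |q| ≤ K * ((1 + t) * eM) →
      |q| ≤ Ktot * Cd * Real.exp (-(ω₀ ^ 2 / γ) * t) := by
    intro K q hK hq
    have step1 : |q| ≤ Ktot * ((1 + t) * Real.exp (-(t * δ₁))) := by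
      calc |q| ≤ K * ((1 + t) * eM) := hq
        _ ≤ Ktot * ((1 + t) * Real.exp (-(t * δ₁))) := by
            have h2 : (1 + t) * eM ≤ (1 + t) * Real.exp (-(t * δ₁)) :=
              mul_le_mul_of_nonneg_left heM1 (by linarith only [ht])
            have h3 : 0 ≤ (1 + t) * eM := mul_nonneg (by linarith only [ht]) heM0
            have hmm := mul_le_mul hK h2 h3 hKt0.le
            linarith only [hmm]
    have step2 : (1 + t) * Real.exp (-(t * δ₁)) ≤ Cd * Real.exp (-(ω₀ ^ 2 / γ * t)) := by
      have hdec := decay_bound hδ₀pos hδ₀lt ht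
      rw [hCddef]
      convert hdec using 3 <;> ring
    calc |q| ≤ Ktot * ((1 + t) * Real.exp (-(t * δ₁))) := step1
      _ ≤ Ktot * (Cd * Real.exp (-(ω₀ ^ 2 / γ * t))) :=
          mul_le_mul_of_nonneg_left step2 hKt0.le
      _ = Ktot * Cd * Real.exp (-(ω₀ ^ 2 / γ) * t) := by rw [mul_assoc]; ring_nf
  have tail2 : ∀ q : ℝ, |q| ≤ Ktot * Cd * Real.exp (-(ω₀ ^ 2 / γ) * t) →
      |q| ≤ Ktot * Cd * Real.exp (-(ω₀ ^ 2 / γ) * t / 2) := by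
    intro q hq
    refine hq.trans (mul_le_mul_of_nonneg_left ?_ (mul_pos hKt0 hCd0).le)
    apply Real.exp_le_exp.mpr
    have h1 : 0 ≤ ω₀ ^ 2 / γ * t := mul_nonneg hδ₀pos.le ht
    have h2 : -(ω₀ ^ 2 / γ) * t ≤ 0 := by linarith only [h1]
    linarith only [h2]
  -- derivative facts in t
  have hEP : HasDerivAt (fun s : ℝ => Real.exp (-(s * a))) (eP * -(1 * a)) t := by
    rw [hePdef]
    exact (((hasDerivAt_id t).mul_const a).neg).exp
  have hEM : HasDerivAt (fun s : ℝ => Real.exp (-(s * bb))) (eM * -(1 * bb)) t := by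
    rw [heMdef]
    exact (((hasDerivAt_id t).mul_const bb).neg).exp
  have hD1 : HasDerivAt (fun s => Ahat1 Φ γ s k)
      (p * (eP * -(1 * a) - eM * -(1 * bb)) / (2 * u)) t := by
    rw [hpdef, hudef, hadef, hbbdef]
    have h := ((hEP.sub hEM).const_mul (phiHat Φ k)).div_const (2 * uFun Φ γ k)
    rw [hadef, hbbdef] at h
    exact h
  have hD2 : HasDerivAt (fun s => Ahat2 Φ γ s k)
      ((a * (eP * -(1 * a)) - bb * (eM * -(1 * bb))) / (2 * u)) t := by
    rw [hudef, hadef, hbbdef]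
    have h := ((hEP.const_mul a).sub (hEM.const_mul bb)).div_const (2 * uFun Φ γ k)
    rw [hadef, hbbdef] at h
    exact h
  -- derivative facts in k
  have hu'k : HasDerivAt (uFun Φ γ) (-p' / (2 * u)) k := by
    rw [hp'def, hudef]
    exact ((hP' k).const_sub ((γ / 2) ^ 2)).sqrt (hpos k).ne'
  obtain ⟨w, hwdef⟩ : ∃ x : ℝ, x = -p' / (2 * u) := ⟨_, rfl⟩
  have hwk : HasDerivAt (uFun Φ γ) w k := by rw [hwdef]; exact hu'k
  have hw : |w| ≤ U := by
    rw [hwdef, hUdef, abs_div, abs_neg, abs_of_pos (by linarith only [hup] : (0:ℝ) < 2 * u)]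
    have hpM : |p'| ≤ M := by rw [hp'def]; exact hM k
    exact div_le_div₀ hM0 hpM (by linarith only [humin]) (by rw [hudef]; linarith only [hu_ge k])
  have hmPk : HasDerivAt (muP Φ γ) w k := by
    unfold muP; exact hwk.const_add (γ / 2)
  have hmMk : HasDerivAt (muM Φ γ) (-w) k := by
    unfold muM; exact hwk.const_sub (γ / 2)
  have hEPk : HasDerivAt (fun k' => Real.exp (-(t * muP Φ γ k'))) (eP * -(t * w)) k := by
    rw [hePdef, hadef]
    exact ((hmPk.const_mul t).neg).exp
  have hEMk : HasDerivAt (fun k' => Real.exp (-(t * muM Φ γ k'))) (eM * -(t * -w)) k := by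
    rw [heMdef, hbbdef]
    exact ((hmMk.const_mul t).neg).exp
  have hNk : HasDerivAt
      (fun k' => phiHat Φ k' * (Real.exp (-(t * muP Φ γ k')) - Real.exp (-(t * muM Φ γ k'))))
      (p' * (eP - eM) + p * (eP * -(t * w) - eM * -(t * -w))) k := by
    rw [hp'def, hpdef, hePdef, heMdef, hadef, hbbdef]
    have h := (hP' k).mul (hEPk.sub hEMk)
    rw [hePdef, heMdef, hadef, hbbdef] at h
    exact h
  have hDk : HasDerivAt (fun k' => 2 * uFun Φ γ k') (2 * w) k := hwk.const_mul 2
  have hQ5 : HasDerivAt (fun k' => Ahat1 Φ γ t k')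
      (((p' * (eP - eM) + p * (eP * -(t * w) - eM * -(t * -w))) * (2 * u) -
        p * (eP - eM) * (2 * w)) / (2 * u) ^ 2) k := by
    rw [hp'def, hpdef, hePdef, heMdef, hadef, hbbdef, hudef]
    have h := hNk.div hDk (ne_of_gt (by linarith only [hu_pos k] : (0:ℝ) < 2 * uFun Φ γ k))
    rw [hp'def, hpdef, hePdef, heMdef, hadef, hbbdef] at h
    exact h
  have hN2k : HasDerivAt
      (fun k' => muP Φ γ k' * Real.exp (-(t * muP Φ γ k')) -
        muM Φ γ k' * Real.exp (-(t * muM Φ γ k')))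
      ((w * eP + a * (eP * -(t * w))) - (-w * eM + bb * (eM * -(t * -w)))) k := by
    rw [hePdef, heMdef, hadef, hbbdef]
    have h := (hmPk.mul hEPk).sub (hmMk.mul hEMk)
    rw [hePdef, heMdef, hadef, hbbdef] at h
    exact h
  have hQ6 : HasDerivAt (fun k' => Ahat2 Φ γ t k')
      ((((w * eP + a * (eP * -(t * w))) - (-w * eM + bb * (eM * -(t * -w)))) * (2 * u) -
        (a * eP - bb * eM) * (2 * w)) / (2 * u) ^ 2) k := by
    rw [hePdef, heMdef, hadef, hbbdef, hudef]
    have h := hN2k.div hDk (ne_of_gt (by linarith only [hu_pos k] : (0:ℝ) < 2 * uFun Φ γ k))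
    rw [hePdef, heMdef, hadef, hbbdef] at h
    exact h
  -- bounds
  have husq : 4 * umin ^ 2 ≤ (2 * u) ^ 2 := by
    have h1 : umin ≤ u := by rw [hudef]; exact hu_ge k
    linarith only [mul_self_le_mul_self humin.le h1]
  have hDb : |2 * u| ≤ γ := by rw [abs_of_pos (by linarith only [hup])]; exact h2uγ
  have hD'b : |2 * w| ≤ 2 * U := by
    rw [abs_mul, abs_of_nonneg (by norm_num : (0:ℝ) ≤ 2)]; linarith only [hw]
  have hpSb : |p| ≤ Sb := by rw [hpdef]; exact hSb k
  have hp'M : |p'| ≤ M := by rw [hp'def]; exact hM k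
  have he1t : (0:ℝ) ≤ (1 + t) * eM := mul_nonneg (by linarith only [ht]) heM0
  -- B1
  have B1 : |Ahat1 Φ γ t k| ≤ Sb * ((1 + t) * eM) := by
    have hval : Ahat1 Φ γ t k = p * (eP - eM) / (2 * u) := by
      rw [hpdef, hePdef, heMdef, hudef, hadef, hbbdef]; rfl
    rw [hval]
    have hfb := frac_bound1 hup hpSb hd
    have h2 : Sb * (t * eM) ≤ Sb * ((1 + t) * eM) :=
      mul_le_mul_of_nonneg_left (by linarith only [heM0]) hSb0
    linarith only [hfb, h2]
  -- B2
  have hQ2core : |(a * eP - bb * eM) / (2 * u)| ≤ (1 + γ * t) * eM :=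
    frac_bound2 hup hab hb0 hbγ h2uγ heP0 hePM hd ht
  have hQ2mono : (1 + γ * t) * eM ≤ (1 + γ) * ((1 + t) * eM) := by
    have e1 : 0 ≤ t * eM := mul_nonneg ht heM0
    have e2 : 0 ≤ γ * eM := mul_nonneg hγ0 heM0
    linarith only [e1, e2]
  have B2 : |Ahat2 Φ γ t k| ≤ (1 + γ) * ((1 + t) * eM) := by
    have hval : Ahat2 Φ γ t k = (a * eP - bb * eM) / (2 * u) := by
      rw [hePdef, heMdef, hudef, hadef, hbbdef]; rfl
    rw [hval]
    linarith only [hQ2core, hQ2mono]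
  -- B3
  have B3 : |deriv (fun s => Ahat1 Φ γ s k) t| ≤ Sb * (1 + γ) * ((1 + t) * eM) := by
    rw [hD1.deriv]
    have hval : p * (eP * -(1 * a) - eM * -(1 * bb)) / (2 * u) =
        -(p * ((a * eP - bb * eM) / (2 * u))) := by ring
    rw [hval, abs_neg, abs_mul]
    calc |p| * |(a * eP - bb * eM) / (2 * u)| ≤ Sb * ((1 + γ * t) * eM) :=
        mul_le_mul hpSb hQ2core (abs_nonneg _) hSb0
      _ ≤ Sb * ((1 + γ) * ((1 + t) * eM)) := mul_le_mul_of_nonneg_left hQ2mono hSb0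
      _ = Sb * (1 + γ) * ((1 + t) * eM) := by ring
  -- B4
  have B4 : |deriv (fun s => Ahat2 Φ γ s k) t| ≤ (γ + γ ^ 2) * ((1 + t) * eM) := by
    rw [hD2.deriv]
    have hval : (a * (eP * -(1 * a)) - bb * (eM * -(1 * bb))) / (2 * u) =
        -((a ^ 2 * eP - bb ^ 2 * eM) / (2 * u)) := by ring
    rw [hval, abs_neg]
    have hfb := frac_bound4 hup hab habγ hb0 hbγ heP0 hePM hd ht
    have h2 : (γ + γ ^ 2 * t) * eM ≤ (γ + γ ^ 2) * ((1 + t) * eM) := by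
      have e1 : 0 ≤ γ * (t * eM) := mul_nonneg hγ0 (mul_nonneg ht heM0)
      have e2 : 0 ≤ γ ^ 2 * eM := mul_nonneg (sq_nonneg γ) heM0
      linarith only [e1, e2]
    linarith only [hfb, h2]
  -- B5
  have B5 : |deriv (fun k' => Ahat1 Φ γ t k') k| ≤ K5 * ((1 + t) * eM) := by
    rw [hQ5.deriv]
    have hN'b := Nk_bound ht hp'M hpSb hw hup h2uγ heP0 hePM hd
    have hNb := N_bound ht hpSb hup h2uγ heP0 hePM hd
    have hdb := div_bound_aux he1t hN'b hNb hDb hD'b humin2 husq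
    rw [hK5def]
    exact hdb
  -- B6
  have B6 : |deriv (fun k' => Ahat2 Φ γ t k') k| ≤ K6 * ((1 + t) * eM) := by
    rw [hQ6.deriv]
    have hN'b := N2k_bound ht hw ha0 haγ hb0 hbγ heP0 hePM
    have hNb := N2_bound ht ha0 haγ hb0 hbγ heP0 hePM
    have hdb := div_bound_aux he1t hN'b hNb hDb hD'b humin2 husq
    rw [hK6def]
    exact hdb
  -- assemble
  refine ⟨⟨tail _ _ (by rw [hKtdef]; linarith only [hSb0, hγ0, hx1, hx2, hK50, hK60]) B1, tail _ _ (by rw [hKtdef]; linarith only [hSb0, hγ0, hx1, hx2, hK50, hK60]) B2⟩,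
    ⟨tail _ _ (by rw [hKtdef]; linarith only [hSb0, hγ0, hx1, hx2, hK50, hK60]) B3, tail _ _ (by rw [hKtdef]; linarith only [hSb0, hγ0, hx1, hx2, hK50, hK60]) B4⟩,
    ⟨tail2 _ (tail _ _ (by rw [hKtdef]; linarith only [hSb0, hγ0, hx1, hx2, hK50, hK60]) B5),
     tail2 _ (tail _ _ (by rw [hKtdef]; linarith only [hSb0, hγ0, hx1, hx2, hK50, hK60]) B6)⟩⟩
end
end

section
/- Suppose Φ satisfies Assumption (A1) and γ² > 4 max_k Φ̂(k). Let ω_max := max_k ω(k), u₀ := √((γ/2)² − ω_max²) > 0, t₁ := (2u₀)^{−1} ln(2γ²/ω₀²), and c₁ := ω₀²/(2γ²). Then −Â²_t(k) ≥ c₁ e^{−γt/2} for all t ≥ t₁ and all k. -/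
open Real MeasureTheory Matrix
open scoped BigOperators

noncomputable section

set_option maxHeartbeats 1000000 in
/-- the explicit lower bound `−Â²_t(k) ≥ c₁ e^{−γt/2}` for `t ≥ t₁`
(Lemma 4.4, item 3). -/
theorem stmt4 (Φ : ℤ → ℝ) (ω₀ γ : ℝ) (hA1 : AssumptionA1 Φ ω₀) (hγ : 0 < γ)
    (hdom : 4 * supPhiHat Φ < γ ^ 2) :
    ∀ t : ℝ,
      (2 * Real.sqrt ((γ / 2) ^ 2 - supPhiHat Φ))⁻¹ * Real.log (2 * γ ^ 2 / ω₀ ^ 2) ≤ t →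
      ∀ k : ℝ, ω₀ ^ 2 / (2 * γ ^ 2) * Real.exp (-(γ * t) / 2) ≤ -Ahat2 Φ γ t k := by
  obtain ⟨⟨C, hC, δ, hδ, hdec⟩, hsymm, hw0, hpin⟩ := hA1
  -- Summability of the dominating sequence
  have hgeom : Summable (fun n : ℕ => Real.exp (-δ * n)) := by
    simpa [mul_comm] using Real.summable_exp_nat_mul_iff.mpr (neg_lt_zero.mpr hδ)
  have hsumZ : Summable (fun x : ℤ => Real.exp (-δ * |(x : ℝ)|)) := by
    apply Summable.of_nat_of_neg
    · refine hgeom.congr fun n => ?_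
      rw [Int.cast_natCast, abs_of_nonneg (by positivity : (0:ℝ) ≤ (n:ℝ))]
    · refine hgeom.congr fun n => ?_
      rw [Int.cast_neg, Int.cast_natCast, abs_neg, abs_of_nonneg (by positivity : (0:ℝ) ≤ (n:ℝ))]
  have hsumg : Summable (fun x : ℤ => C * Real.exp (-δ * |(x : ℝ)|)) := hsumZ.mul_left C
  have hterm : ∀ (k : ℝ) (x : ℤ),
      |Φ x * Real.cos (2 * π * k * (x : ℝ))| ≤ C * Real.exp (-δ * |(x : ℝ)|) := by
    intro k x
    calc |Φ x * Real.cos (2 * π * k * (x : ℝ))|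
        = |Φ x| * |Real.cos (2 * π * k * (x : ℝ))| := abs_mul _ _
      _ ≤ |Φ x| * 1 := by
          exact mul_le_mul_of_nonneg_left (Real.abs_cos_le_one _) (abs_nonneg _)
      _ ≤ C * Real.exp (-δ * |(x : ℝ)|) := by
          simpa using hdec x
  have hbound : ∀ k : ℝ, phiHat Φ k ≤ ∑' x : ℤ, C * Real.exp (-δ * |(x : ℝ)|) := by
    intro k
    have hs : Summable (fun x : ℤ => Φ x * Real.cos (2 * π * k * (x : ℝ))) :=
      Summable.of_norm_bounded hsumg (fun x => hterm k x)
    refine Summable.tsum_le_tsum (fun x => ?_) hs hsumg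
    exact le_trans (le_abs_self _) (hterm k x)
  have hbdd : BddAbove (Set.range (phiHat Φ)) := by
    refine ⟨∑' x : ℤ, C * Real.exp (-δ * |(x : ℝ)|), ?_⟩
    rintro _ ⟨k, rfl⟩
    exact hbound k
  intro t ht k
  have hw0sq : (0:ℝ) < ω₀ ^ 2 := pow_pos hw0 2
  set S := supPhiHat Φ with hSdef
  set P := phiHat Φ k with hPdef
  have hPk : ω₀ ^ 2 ≤ P := hpin k
  have hPS : P ≤ S := le_ciSup hbdd k
  have hPpos : 0 < P := lt_of_lt_of_le hw0sq hPk
  have hSlt : S < (γ / 2) ^ 2 := by nlinarith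
  have hu0sq : 0 < (γ / 2) ^ 2 - S := by linarith
  set u₀ := Real.sqrt ((γ / 2) ^ 2 - S) with hu0def
  have hu0 : 0 < u₀ := Real.sqrt_pos.mpr hu0sq
  set u := uFun Φ γ k with hudef
  have hPle : P ≤ (γ / 2) ^ 2 := le_trans hPS hSlt.le
  have husq : u ^ 2 = (γ / 2) ^ 2 - P := by
    rw [hudef, uFun, Real.sq_sqrt (by linarith)]
  have hupos : 0 < u := by
    rw [hudef, uFun]
    exact Real.sqrt_pos.mpr (by linarith)
  have huu0 : u₀ ≤ u := by
    rw [hudef, uFun, hu0def]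
    exact Real.sqrt_le_sqrt (by linarith)
  have hult : u < γ / 2 := by nlinarith [husq, hPpos, hupos]
  -- t is nonnegative
  have harg : (1:ℝ) ≤ 2 * γ ^ 2 / ω₀ ^ 2 := by
    rw [le_div_iff₀ hw0sq]
    nlinarith
  have hargpos : (0:ℝ) < 2 * γ ^ 2 / ω₀ ^ 2 := lt_of_lt_of_le one_pos harg
  have ht1 : (0:ℝ) ≤ (2 * u₀)⁻¹ * Real.log (2 * γ ^ 2 / ω₀ ^ 2) :=
    mul_nonneg (inv_nonneg.mpr (by linarith)) (Real.log_nonneg harg)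
  have ht0 : 0 ≤ t := le_trans ht1 ht
  -- the key exponential bound
  have hlog : Real.log (2 * γ ^ 2 / ω₀ ^ 2) ≤ 2 * t * u := by
    have h1 : Real.log (2 * γ ^ 2 / ω₀ ^ 2) ≤ 2 * u₀ * t := by
      rw [← inv_mul_le_iff₀ (by linarith : (0:ℝ) < 2 * u₀)]
      exact ht
    nlinarith
  have hexpkey : Real.exp (-(2 * t * u)) ≤ ω₀ ^ 2 / (2 * γ ^ 2) := by
    have h2 : 2 * γ ^ 2 / ω₀ ^ 2 ≤ Real.exp (2 * t * u) := by
      calc 2 * γ ^ 2 / ω₀ ^ 2 = Real.exp (Real.log (2 * γ ^ 2 / ω₀ ^ 2)) :=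
            (Real.exp_log hargpos).symm
        _ ≤ Real.exp (2 * t * u) := Real.exp_le_exp.mpr hlog
    rw [Real.exp_neg]
    calc (Real.exp (2 * t * u))⁻¹ ≤ (2 * γ ^ 2 / ω₀ ^ 2)⁻¹ :=
          inv_anti₀ hargpos h2
      _ = ω₀ ^ 2 / (2 * γ ^ 2) := by rw [inv_div]
  -- abbreviations
  set e := Real.exp (-(γ * t) / 2) with hedef
  set X := Real.exp (t * u) with hXdef
  set Y := Real.exp (-(2 * t * u)) with hYdef
  have hepos : 0 < e := Real.exp_pos _
  have hX1 : (1:ℝ) ≤ X := Real.one_le_exp (mul_nonneg ht0 hupos.le)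
  have hYpos : 0 < Y := Real.exp_pos _
  have hE1 : Real.exp (-(t * muM Φ γ k)) = e * X := by
    rw [hedef, hXdef, ← Real.exp_add, muM, ← hudef]
    ring_nf
  have hE2 : Real.exp (-(t * muP Φ γ k)) = e * X * Y := by
    rw [hedef, hXdef, hYdef, ← Real.exp_add, ← Real.exp_add, muP, ← hudef]
    ring_nf
  -- the bracket bound
  have hmuM : ω₀ ^ 2 / γ ≤ γ / 2 - u := by
    rw [div_le_iff₀ hγ]
    nlinarith [sq_nonneg (γ / 2 - u), husq, hPk]
  have hmuPY : (γ / 2 + u) * Y ≤ ω₀ ^ 2 / (2 * γ) := by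
    calc (γ / 2 + u) * Y ≤ γ * (ω₀ ^ 2 / (2 * γ ^ 2)) := by
          apply mul_le_mul (by linarith) hexpkey hYpos.le hγ.le
      _ = ω₀ ^ 2 / (2 * γ) := by
          field_simp
  have hbr : ω₀ ^ 2 / (2 * γ) ≤ (γ / 2 - u) - (γ / 2 + u) * Y := by
    have : ω₀ ^ 2 / γ - ω₀ ^ 2 / (2 * γ) = ω₀ ^ 2 / (2 * γ) := by
      field_simp
      ring
    linarith
  have hbrpos : 0 < (γ / 2 - u) - (γ / 2 + u) * Y :=
    lt_of_lt_of_le (by positivity) hbr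
  have hfinal : ω₀ ^ 2 / (2 * γ ^ 2) * (2 * u) ≤ X * ((γ / 2 - u) - (γ / 2 + u) * Y) := by
    have h3 : ω₀ ^ 2 / (2 * γ ^ 2) * (2 * u) ≤ ω₀ ^ 2 / (2 * γ) := by
      rw [div_mul_eq_mul_div, div_le_div_iff₀ (by positivity) (by positivity)]
      nlinarith [mul_nonneg (mul_nonneg hw0sq.le hγ.le) (by linarith : (0:ℝ) ≤ γ / 2 - u)]
    calc ω₀ ^ 2 / (2 * γ ^ 2) * (2 * u) ≤ ω₀ ^ 2 / (2 * γ) := h3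
      _ ≤ 1 * ((γ / 2 - u) - (γ / 2 + u) * Y) := by linarith
      _ ≤ X * ((γ / 2 - u) - (γ / 2 + u) * Y) :=
          mul_le_mul_of_nonneg_right hX1 hbrpos.le
  -- put it together
  rw [Ahat2, ← hudef, ← neg_div, le_div_iff₀ (by linarith : (0:ℝ) < 2 * u)]
  rw [hE1, hE2, muP, muM, ← hudef]
  have := mul_le_mul_of_nonneg_left hfinal hepos.le
  nlinarith [this, hepos]
end
end

section
/- Suppose Φ satisfies Assumption (A1) and γ² > 4 max_k Φ̂(k), and set δ₀ := ω₀²/γ. Then there exist constants c₂, γ₂ > 0 such that the Fourier coefficients Ã^i_{t,x} := ∫₀¹ dk e^{i2πx·k} Â^i_t(k) satisfy |Ã^i_{t,x}| ≤ c₂ e^{−δ₀ t/2 − γ₂ |x|} for i = 1,2, all t ≥ 0 and all x ∈ ℤ. -/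
open Real MeasureTheory Matrix
open scoped BigOperators

noncomputable section

lemma norm_cos_le' (z : ℂ) : ‖Complex.cos z‖ ≤ Real.exp |z.im| := by
  rw [Complex.cos]
  have h1 : ‖Complex.exp (z*Complex.I)‖ ≤ Real.exp |z.im| := by
    rw [Complex.norm_exp]
    apply Real.exp_le_exp.2
    simp [Complex.mul_I_re]
    exact neg_le_abs z.im
  have h2 : ‖Complex.exp (-z*Complex.I)‖ ≤ Real.exp |z.im| := by
    rw [Complex.norm_exp]
    apply Real.exp_le_exp.2
    simp [Complex.mul_I_re]
    exact le_abs_self z.im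
  calc ‖(Complex.exp (z*Complex.I) + Complex.exp (-z*Complex.I))/2‖
      = ‖Complex.exp (z*Complex.I) + Complex.exp (-z*Complex.I)‖/2 := by
        rw [norm_div]; norm_num
    _ ≤ (Real.exp |z.im| + Real.exp |z.im|)/2 := by
        have := norm_add_le (Complex.exp (z*Complex.I)) (Complex.exp (-z*Complex.I))
        linarith
    _ = Real.exp |z.im| := by ring

lemma summable_exp_neg_abs_int {c : ℝ} (hc : 0 < c) :
    Summable (fun x : ℤ => Real.exp (-(c * |(x : ℝ)|))) := by
  have hr : Real.exp (-c) < 1 := Real.exp_lt_one_iff.2 (by linarith)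
  have hgeo : Summable (fun n : ℕ => Real.exp (-(c * n))) := by
    have := summable_geometric_of_lt_one (le_of_lt (Real.exp_pos (-c))) hr
    refine this.congr fun n => ?_
    rw [← Real.exp_nat_mul]; ring_nf
  apply Summable.of_nat_of_neg <;> simpa using hgeo

/-- Complex extension of `phiHat`. -/
def GC (Φ : ℤ → ℝ) (z : ℂ) : ℂ := ∑' x : ℤ, (Φ x : ℂ) * Complex.cos (2 * π * z * (x : ℂ))


lemma GC_term_bound {Φ : ℤ → ℝ} {C δ : ℝ} (hdec : ∀ x : ℤ, |Φ x| ≤ C * Real.exp (-δ * |(x : ℝ)|))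
    (hδ : 0 < δ) {z : ℂ} (hz : |z.im| ≤ δ / (4 * π)) (x : ℤ) :
    ‖(Φ x : ℂ) * Complex.cos (2 * π * z * (x : ℂ))‖ ≤ C * Real.exp (-(δ/2 * |(x : ℝ)|)) := by
  rw [norm_mul, Complex.norm_real, Real.norm_eq_abs]
  have h1 := norm_cos_le' (2 * π * z * (x : ℂ))
  have him : |(2 * π * z * (x : ℂ)).im| = 2 * π * |z.im| * |(x:ℝ)| := by
    have : (2 * π * z * (x : ℂ)).im = 2 * π * z.im * (x:ℝ) := by
      simp [Complex.mul_im, Complex.mul_re]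
    rw [this, abs_mul, abs_mul]
    congr 2
    exact abs_of_nonneg (by positivity)
  have hle : |(2 * π * z * (x : ℂ)).im| ≤ δ/2 * |(x:ℝ)| := by
    rw [him]
    have : 2 * π * |z.im| ≤ δ / 2 := by
      have hπ := Real.pi_pos
      calc 2 * π * |z.im| ≤ 2 * π * (δ / (4*π)) := by gcongr
        _ = δ/2 := by field_simp; ring
    exact mul_le_mul_of_nonneg_right this (abs_nonneg _)
  calc |Φ x| * ‖Complex.cos (2 * π * z * (x : ℂ))‖
      ≤ (C * Real.exp (-δ * |(x : ℝ)|)) * Real.exp (δ/2 * |(x:ℝ)|) := by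
        apply mul_le_mul (hdec x) (h1.trans (Real.exp_le_exp.2 hle)) (norm_nonneg _)
        have h0 : (0:ℝ) ≤ |Φ x| := abs_nonneg _
        exact le_trans h0 (hdec x)
    _ = C * Real.exp (-(δ/2 * |(x : ℝ)|)) := by rw [mul_assoc, ← Real.exp_add]; ring_nf

lemma GC_summable {Φ : ℤ → ℝ} {C δ : ℝ} (hdec : ∀ x : ℤ, |Φ x| ≤ C * Real.exp (-δ * |(x : ℝ)|))
    (hδ : 0 < δ) {z : ℂ} (hz : |z.im| ≤ δ / (4 * π)) :
    Summable (fun x : ℤ => (Φ x : ℂ) * Complex.cos (2 * π * z * (x : ℂ))) := by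
  apply Summable.of_norm
  apply Summable.of_nonneg_of_le (fun x => norm_nonneg _)
    (fun x => GC_term_bound hdec hδ hz x)
  exact (summable_exp_neg_abs_int (by positivity : (0:ℝ) < δ/2)).mul_left C

lemma GC_diffOn {Φ : ℤ → ℝ} {C δ : ℝ} (hdec : ∀ x : ℤ, |Φ x| ≤ C * Real.exp (-δ * |(x : ℝ)|))
    (hδ : 0 < δ) :
    DifferentiableOn ℂ (GC Φ) {z : ℂ | |z.im| < δ / (4 * π)} := by
  apply Complex.differentiableOn_tsum_of_summable_norm
    ((summable_exp_neg_abs_int (by positivity : (0:ℝ) < δ/2)).mul_left C)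
  · intro i
    apply DifferentiableOn.const_mul
    apply Differentiable.differentiableOn
    apply Complex.differentiable_cos.comp
    exact (differentiable_const _).mul differentiable_id |>.mul (differentiable_const _)
  · have : {z : ℂ | |z.im| < δ / (4 * π)} = Complex.im ⁻¹' (Set.Ioo (-(δ/(4*π))) (δ/(4*π))) := by
      ext z; simp [abs_lt]
    rw [this]
    exact isOpen_Ioo.preimage Complex.continuous_im
  · intro i w hw
    exact GC_term_bound hdec hδ (le_of_lt hw) i

lemma GC_real {Φ : ℤ → ℝ} (k : ℝ) : GC Φ (k : ℂ) = ((phiHat Φ k : ℝ) : ℂ) := by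
  rw [phiHat, GC, Complex.ofReal_tsum]
  congr 1; ext x
  push_cast [Complex.ofReal_cos]
  ring_nf

lemma GC_periodic {Φ : ℤ → ℝ} (z : ℂ) : GC Φ (z + 1) = GC Φ z := by
  unfold GC
  congr 1; ext x
  congr 1
  have : 2 * (π:ℂ) * (z+1) * (x:ℂ) = 2 * π * z * x + (x:ℂ) * (2*π) := by push_cast; ring
  rw [this, Complex.cos_add_int_mul_two_pi]







def wC (Φ : ℤ → ℝ) (γ : ℝ) (z : ℂ) : ℂ := (((γ/2)^2 : ℝ) : ℂ) - GC Φ z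
def uCC (Φ : ℤ → ℝ) (γ : ℝ) (z : ℂ) : ℂ := wC Φ γ z ^ (1/2 : ℂ)
def mpC (Φ : ℤ → ℝ) (γ : ℝ) (z : ℂ) : ℂ := (γ/2 : ℝ) + uCC Φ γ z
def mmC (Φ : ℤ → ℝ) (γ : ℝ) (z : ℂ) : ℂ := (γ/2 : ℝ) - uCC Φ γ z
def A1C (Φ : ℤ → ℝ) (γ t : ℝ) (z : ℂ) : ℂ :=
  GC Φ z * (Complex.exp (-((t:ℂ) * mpC Φ γ z)) - Complex.exp (-((t:ℂ) * mmC Φ γ z)))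
    / (2 * uCC Φ γ z)
def A2C (Φ : ℤ → ℝ) (γ t : ℝ) (z : ℂ) : ℂ :=
  (mpC Φ γ z * Complex.exp (-((t:ℂ) * mpC Φ γ z))
    - mmC Φ γ z * Complex.exp (-((t:ℂ) * mmC Φ γ z))) / (2 * uCC Φ γ z)

lemma summable_absPhi {Φ : ℤ → ℝ} {C δ : ℝ}
    (hdec : ∀ x : ℤ, |Φ x| ≤ C * Real.exp (-δ * |(x : ℝ)|)) (hδ : 0 < δ) :
    Summable (fun x : ℤ => |Φ x|) := by
  apply Summable.of_nonneg_of_le (fun x => abs_nonneg _) hdec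
  exact ((summable_exp_neg_abs_int hδ).mul_left C).congr (fun x => by ring_nf)

lemma abs_phiHat_le {Φ : ℤ → ℝ} (hsum : Summable (fun x : ℤ => |Φ x|)) (k : ℝ) :
    |phiHat Φ k| ≤ ∑' x : ℤ, |Φ x| := by
  have hb : ∀ x : ℤ, |Φ x * Real.cos (2 * π * k * (x:ℝ))| ≤ |Φ x| := by
    intro x
    rw [abs_mul]
    calc |Φ x| * |Real.cos (2*π*k*(x:ℝ))| ≤ |Φ x| * 1 :=
          mul_le_mul_of_nonneg_left (Real.abs_cos_le_one _) (abs_nonneg _)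
      _ = |Φ x| := mul_one _
  have hs : Summable (fun x : ℤ => Φ x * Real.cos (2 * π * k * (x:ℝ))) := by
    apply Summable.of_abs
    exact hsum.of_nonneg_of_le (fun x => abs_nonneg _) hb
  have hn : Summable (fun x : ℤ => ‖Φ x * Real.cos (2 * π * k * (x:ℝ))‖) := by
    simpa only [Real.norm_eq_abs] using hs.abs
  have key := norm_tsum_le_tsum_norm hn
  calc |phiHat Φ k| ≤ ∑' x : ℤ, |Φ x * Real.cos (2 * π * k * (x:ℝ))| := by
        rw [phiHat]; simpa only [Real.norm_eq_abs] using key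
    _ ≤ ∑' x : ℤ, |Φ x| :=
        Summable.tsum_le_tsum hb (hsum.of_nonneg_of_le (fun x => abs_nonneg _) hb) hsum

lemma phiHat_le_sup {Φ : ℤ → ℝ} (hsum : Summable (fun x : ℤ => |Φ x|)) (k : ℝ) :
    phiHat Φ k ≤ supPhiHat Φ := by
  apply le_ciSup (f := fun k => phiHat Φ k)
  refine ⟨∑' x : ℤ, |Φ x|, ?_⟩
  rintro y ⟨k', rfl⟩
  exact (le_abs_self _).trans (abs_phiHat_le hsum k')

lemma wC_real {Φ : ℤ → ℝ} (γ : ℝ) (k : ℝ) :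
    wC Φ γ (k : ℂ) = (((γ/2)^2 - phiHat Φ k : ℝ) : ℂ) := by
  rw [wC, GC_real]; push_cast; ring

lemma uCC_real {Φ : ℤ → ℝ} {γ : ℝ} {k : ℝ} (ha : 0 ≤ (γ/2)^2 - phiHat Φ k) :
    uCC Φ γ (k : ℂ) = ((uFun Φ γ k : ℝ) : ℂ) := by
  rw [uCC, wC_real, uFun, Real.sqrt_eq_rpow]
  rw [Complex.ofReal_cpow ha]
  norm_num

lemma exp_mp_real {Φ : ℤ → ℝ} {γ : ℝ} {k : ℝ} (ha : 0 ≤ (γ/2)^2 - phiHat Φ k) (t : ℝ) :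
    Complex.exp (-((t:ℂ) * mpC Φ γ (k:ℂ))) = ((Real.exp (-(t * muP Φ γ k)) : ℝ) : ℂ) := by
  rw [Complex.ofReal_exp, mpC, uCC_real ha]; congr 1; rw [muP]; push_cast; ring

lemma exp_mm_real {Φ : ℤ → ℝ} {γ : ℝ} {k : ℝ} (ha : 0 ≤ (γ/2)^2 - phiHat Φ k) (t : ℝ) :
    Complex.exp (-((t:ℂ) * mmC Φ γ (k:ℂ))) = ((Real.exp (-(t * muM Φ γ k)) : ℝ) : ℂ) := by
  rw [Complex.ofReal_exp, mmC, uCC_real ha]; congr 1; rw [muM]; push_cast; ring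

lemma A1C_real {Φ : ℤ → ℝ} {γ : ℝ} {k : ℝ} (ha : 0 ≤ (γ/2)^2 - phiHat Φ k) (t : ℝ) :
    A1C Φ γ t (k : ℂ) = ((Ahat1 Φ γ t k : ℝ) : ℂ) := by
  rw [A1C, exp_mp_real ha, exp_mm_real ha, uCC_real ha, GC_real, Ahat1]
  push_cast
  ring

lemma A2C_real {Φ : ℤ → ℝ} {γ : ℝ} {k : ℝ} (ha : 0 ≤ (γ/2)^2 - phiHat Φ k) (t : ℝ) :
    A2C Φ γ t (k : ℂ) = ((Ahat2 Φ γ t k : ℝ) : ℂ) := by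
  rw [A2C, exp_mp_real ha, exp_mm_real ha, mpC, mmC, uCC_real ha, Ahat2, muP, muM]
  push_cast
  ring

lemma muM_ge {Φ : ℤ → ℝ} {ω₀ γ : ℝ} (hω₀ : 0 < ω₀) (hγ : 0 < γ)
    (hpin : ∀ k : ℝ, ω₀ ^ 2 ≤ phiHat Φ k) {k : ℝ} (hlt : phiHat Φ k < (γ/2)^2) :
    ω₀^2/γ ≤ muM Φ γ k := by
  have h1 := hpin k
  have ha : 0 ≤ (γ/2)^2 - phiHat Φ k := by linarith
  set s := uFun Φ γ k with hs
  have hs0 : 0 ≤ s := Real.sqrt_nonneg _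
  have hs2 : s^2 = (γ/2)^2 - phiHat Φ k := Real.sq_sqrt ha
  have hsle : s ≤ γ/2 := by nlinarith [sq_nonneg (s - γ/2)]
  rw [muM, div_le_iff₀ hγ]
  nlinarith

lemma contour_bound {F : ℂ → ℂ} {c B c₀ : ℝ}
    (hd : DifferentiableOn ℂ F (Set.Icc (0:ℝ) 1 ×ℂ Set.Icc (-c) c))
    (hper : ∀ z, F (z + 1) = F z)
    (hc₀ : |c₀| ≤ c)
    (hB : ∀ k ∈ Set.Icc (0:ℝ) 1, ‖F ((k:ℂ) + c₀ * Complex.I)‖ ≤ B) :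
    ‖∫ k in (0:ℝ)..1, F (k : ℂ)‖ ≤ B := by
  have hc : 0 ≤ c := le_trans (abs_nonneg c₀) hc₀
  have hsub : Set.uIcc (0:ℝ) 1 ×ℂ Set.uIcc 0 c₀ ⊆ Set.Icc (0:ℝ) 1 ×ℂ Set.Icc (-c) c := by
    intro z hz
    rw [Complex.mem_reProdIm] at hz ⊢
    refine ⟨by simpa [Set.uIcc_of_le] using hz.1, ?_⟩
    have h2 := hz.2
    have : Set.uIcc (0:ℝ) c₀ ⊆ Set.Icc (-c) c :=
      Set.uIcc_subset_Icc ⟨by linarith, hc⟩ ⟨(abs_le.1 hc₀).1, (abs_le.1 hc₀).2⟩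
    exact this h2
  have key := Complex.integral_boundary_rect_eq_zero_of_differentiableOn F 0
      (1 + c₀ * Complex.I) (by
        apply hd.mono
        convert hsub using 2 <;> simp)
  simp only [Complex.add_re, Complex.one_re, Complex.mul_re, Complex.I_re, Complex.ofReal_re,
    Complex.I_im, Complex.ofReal_im, Complex.add_im, Complex.one_im, Complex.mul_im,
    Complex.zero_re, Complex.zero_im] at key
  ring_nf at key
  -- identify the side integrals
  have hside : ∀ y : ℝ, F (1 + (y:ℂ) * Complex.I) = F (0 + (y:ℂ) * Complex.I) := by
    intro y
    have := hper ((0:ℂ) + (y:ℂ) * Complex.I)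
    rw [← this]; ring_nf
  have heq : (∫ k in (0:ℝ)..1, F (k : ℂ)) = ∫ x in (0:ℝ)..1, F ((x:ℂ) + (c₀:ℝ) * Complex.I) := by
    have h1 : (∫ x in (0:ℝ)..1, F ((x:ℂ) + (0:ℝ) * Complex.I)) = ∫ k in (0:ℝ)..1, F (k : ℂ) := by
      apply intervalIntegral.integral_congr
      intro k _; norm_num
    have h2 : (∫ y in (0:ℝ)..c₀, F ((1:ℝ) + (y:ℂ) * Complex.I))
        = ∫ y in (0:ℝ)..c₀, F ((0:ℝ) + (y:ℂ) * Complex.I) := by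
      apply intervalIntegral.integral_congr
      intro y _
      simpa using hside y
    push_cast at key h2
    have h2' : (∫ y in (0:ℝ)..c₀, F (Complex.I * (y:ℂ) + 1))
        = ∫ y in (0:ℝ)..c₀, F (0 + Complex.I * (y:ℂ)) := by
      apply intervalIntegral.integral_congr
      intro y _
      show F (Complex.I * (y:ℂ) + 1) = F (0 + Complex.I * (y:ℂ))
      rw [show Complex.I * (y:ℂ) + 1 = 1 + (y:ℂ) * Complex.I by ring,
        show (0:ℂ) + Complex.I * (y:ℂ) = 0 + (y:ℂ) * Complex.I by ring]
      exact hside y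
    have h3 : (∫ x in (0:ℝ)..1, F (Complex.I * (c₀:ℂ) + (x:ℂ)))
        = ∫ x in (0:ℝ)..1, F ((x:ℂ) + (c₀:ℂ) * Complex.I) := by
      apply intervalIntegral.integral_congr
      intro x _
      show F (Complex.I * (c₀:ℂ) + (x:ℂ)) = F ((x:ℂ) + (c₀:ℂ) * Complex.I)
      rw [show Complex.I * (c₀:ℂ) + (x:ℂ) = (x:ℂ) + (c₀:ℂ) * Complex.I by ring]
    rw [h2', h3] at key
    rw [← h1]
    push_cast
    linear_combination key
  rw [heq]
  have hlen : ‖∫ x in (0:ℝ)..1, F ((x:ℂ) + (c₀:ℝ) * Complex.I)‖ ≤ B * |1 - 0| := by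
    apply intervalIntegral.norm_integral_le_of_norm_le_const
    intro k hk
    rw [Set.uIoc_of_le (by norm_num : (0:ℝ) ≤ 1)] at hk
    exact hB k ⟨hk.1.le, hk.2⟩
  simpa using hlen

lemma mmC_real {Φ : ℤ → ℝ} {γ : ℝ} {k : ℝ} (ha : 0 ≤ (γ/2)^2 - phiHat Φ k) :
    mmC Φ γ (k : ℂ) = ((muM Φ γ k : ℝ) : ℂ) := by
  rw [mmC, uCC_real ha, muM]; push_cast; ring

lemma A1C_periodic (Φ : ℤ → ℝ) (γ t : ℝ) (z : ℂ) : A1C Φ γ t (z+1) = A1C Φ γ t z := by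
  simp only [A1C, mpC, mmC, uCC, wC, GC_periodic]

lemma A2C_periodic (Φ : ℤ → ℝ) (γ t : ℝ) (z : ℂ) : A2C Φ γ t (z+1) = A2C Φ γ t z := by
  simp only [A2C, mpC, mmC, uCC, wC, GC_periodic]


set_option maxHeartbeats 1000000 in
/-- exponential decay of the Fourier coefficients `Ã^i_{t,x}`
(Lemma 4.4, item 4). -/
theorem stmt5 (Φ : ℤ → ℝ) (ω₀ γ : ℝ) (hA1 : AssumptionA1 Φ ω₀) (hγ : 0 < γ)
    (hdom : 4 * supPhiHat Φ < γ ^ 2) :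
    ∃ c₂ > (0:ℝ), ∃ γ₂ > (0:ℝ), ∀ t ≥ (0:ℝ), ∀ x : ℤ,
      ‖∫ k in (0:ℝ)..1,
          Complex.exp (((2 * π * (x : ℝ) * k) : ℝ) * Complex.I) * (Ahat1 Φ γ t k : ℂ)‖ ≤
        c₂ * Real.exp (-(ω₀ ^ 2 / γ) * t / 2 - γ₂ * |(x : ℝ)|) ∧
      ‖∫ k in (0:ℝ)..1,
          Complex.exp (((2 * π * (x : ℝ) * k) : ℝ) * Complex.I) * (Ahat2 Φ γ t k : ℂ)‖ ≤
        c₂ * Real.exp (-(ω₀ ^ 2 / γ) * t / 2 - γ₂ * |(x : ℝ)|) := by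
  unfold AssumptionA1 at hA1
  obtain ⟨⟨C, hC, δ, hδ, hdec⟩, hsym, hω₀, hpin⟩ := hA1
  have hsum : Summable (fun x : ℤ => |Φ x|) := summable_absPhi hdec hδ
  have hπ := Real.pi_pos
  have hsup : supPhiHat Φ < (γ/2)^2 := by nlinarith
  have hak : ∀ k : ℝ, 0 < (γ/2)^2 - phiHat Φ k := fun k => by
    have := phiHat_le_sup hsum k; linarith
  have hδ₀ : (0:ℝ) < ω₀^2/γ := by positivity
  set δ₀ := ω₀^2/γ with hδ₀def
  have hδ₀γ : δ₀ < γ/2 := by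
    have h0 : ω₀^2 ≤ phiHat Φ 0 := hpin 0
    have h1 : phiHat Φ 0 ≤ supPhiHat Φ := phiHat_le_sup hsum 0
    rw [hδ₀def, div_lt_iff₀ hγ]
    nlinarith
  -- open sets
  set U : Set ℂ := {z : ℂ | |z.im| < δ/(4*π)} with hUdef
  have hUopen : IsOpen U := by
    have : U = Complex.im ⁻¹' (Set.Ioo (-(δ/(4*π))) (δ/(4*π))) := by
      ext z; simp [hUdef, abs_lt]
    rw [this]; exact isOpen_Ioo.preimage Complex.continuous_im
  have hGdiff : DifferentiableOn ℂ (GC Φ) U := GC_diffOn hdec hδ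
  have hwdiff : DifferentiableOn ℂ (wC Φ γ) U := (differentiableOn_const _).sub hGdiff
  have hwcont := hwdiff.continuousOn
  set V : Set ℂ := U ∩ (wC Φ γ) ⁻¹' {ζ : ℂ | 0 < ζ.re} with hVdef
  have hVopen : IsOpen V :=
    hwcont.isOpen_inter_preimage hUopen (isOpen_lt continuous_const Complex.continuous_re)
  have hVU : V ⊆ U := Set.inter_subset_left
  have hwV : ∀ z ∈ V, 0 < (wC Φ γ z).re := fun z hz => hz.2
  have hwne : ∀ z ∈ V, wC Φ γ z ≠ 0 := by
    intro z hz h0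
    have := hwV z hz; rw [h0] at this; simp at this
  have hslit : ∀ z ∈ V, wC Φ γ z ∈ Complex.slitPlane :=
    fun z hz => Complex.mem_slitPlane_iff.2 (Or.inl (hwV z hz))
  have hudiff : DifferentiableOn ℂ (uCC Φ γ) V :=
    DifferentiableOn.cpow (hwdiff.mono hVU) (differentiableOn_const _) hslit
  have hucont := hudiff.continuousOn
  have hune : ∀ z ∈ V, uCC Φ γ z ≠ 0 := by
    intro z hz h0
    exact hwne z hz ((Complex.cpow_eq_zero_iff _ _).1 h0).1
  have husq : ∀ z ∈ V, uCC Φ γ z * uCC Φ γ z = wC Φ γ z := by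
    intro z hz
    rw [uCC, ← Complex.cpow_add _ _ (hwne z hz)]
    norm_num
  have hmmdiff : DifferentiableOn ℂ (mmC Φ γ) V := (differentiableOn_const _).sub hudiff
  have hmpdiff : DifferentiableOn ℂ (mpC Φ γ) V := (differentiableOn_const _).add hudiff
  set W : Set ℂ := V ∩ (uCC Φ γ) ⁻¹' {ζ : ℂ | 0 < ζ.re} with hWdef
  have hWopen : IsOpen W :=
    hucont.isOpen_inter_preimage hVopen (isOpen_lt continuous_const Complex.continuous_re)
  have hWV : W ⊆ V := Set.inter_subset_left
  set Ω : Set ℂ := W ∩ (mmC Φ γ) ⁻¹' {ζ : ℂ | δ₀/2 < ζ.re} with hΩdef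
  have hΩopen : IsOpen Ω :=
    (hmmdiff.continuousOn.mono hWV).isOpen_inter_preimage hWopen
      (isOpen_lt continuous_const Complex.continuous_re)
  have hΩW : Ω ⊆ W := Set.inter_subset_left
  have hΩV : Ω ⊆ V := fun z hz => hWV (hΩW hz)
  -- reals lie in Ω
  have hrealΩ : ∀ k : ℝ, (k : ℂ) ∈ Ω := by
    intro k
    have ha := hak k
    have h1 : (k:ℂ) ∈ U := by
      simp only [hUdef, Set.mem_setOf_eq, Complex.ofReal_im, abs_zero]
      positivity
    have h2 : (k:ℂ) ∈ V := by
      refine ⟨h1, ?_⟩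
      simp only [Set.mem_preimage, Set.mem_setOf_eq, wC_real, Complex.ofReal_re]
      exact ha
    refine ⟨⟨h2, ?_⟩, ?_⟩
    · simp only [Set.mem_preimage, Set.mem_setOf_eq, uCC_real ha.le, Complex.ofReal_re]
      exact Real.sqrt_pos.2 ha
    · simp only [Set.mem_preimage, Set.mem_setOf_eq, mmC_real ha.le, Complex.ofReal_re]
      have := muM_ge hω₀ hγ hpin (by linarith : phiHat Φ k < (γ/2)^2)
      rw [← hδ₀def] at this
      linarith
  -- compact tube around the reals
  set K : Set ℂ := (fun k : ℝ => (k:ℂ)) '' Set.Icc 0 1 with hKdef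
  have hKc : IsCompact K := isCompact_Icc.image Complex.continuous_ofReal
  obtain ⟨c, hc, hthick⟩ := hKc.exists_cthickening_subset_open hΩopen
    (by rintro _ ⟨k, _, rfl⟩; exact hrealΩ k)
  set R : Set ℂ := Set.Icc (0:ℝ) 1 ×ℂ Set.Icc (-c) c with hRdef
  have hRΩ : R ⊆ Ω := by
    intro z hz
    rw [Complex.mem_reProdIm] at hz
    apply hthick
    apply Metric.mem_cthickening_of_dist_le z ((z.re : ℝ) : ℂ) c K ⟨z.re, hz.1, rfl⟩
    have hzz : z - (z.re : ℂ) = z.im * Complex.I := by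
      apply Complex.ext <;> simp
    rw [Complex.dist_eq, hzz]
    simpa using abs_le.2 ⟨hz.2.1, hz.2.2⟩
  have hRV : R ⊆ V := fun z hz => hΩV (hRΩ hz)
  have hRU : R ⊆ U := fun z hz => hVU (hRV hz)
  have hRcomp : IsCompact R :=
    Metric.isCompact_of_isClosed_isBounded (isClosed_Icc.reProdIm isClosed_Icc)
      (Bornology.IsBounded.reProdIm (Metric.isBounded_Icc _ _) (Metric.isBounded_Icc _ _))
  have hRne : R.Nonempty := by
    refine ⟨0, ?_⟩
    rw [Complex.mem_reProdIm]
    constructor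
    · simp
    · simp only [Complex.zero_im, Set.mem_Icc]
      constructor <;> linarith
  obtain ⟨BG, hBG⟩ := hRcomp.exists_bound_of_continuousOn (hGdiff.continuousOn.mono hRU)
  obtain ⟨Bu, hBu⟩ := hRcomp.exists_bound_of_continuousOn (hucont.mono hRV)
  have hBG0 : 0 ≤ BG := le_trans (norm_nonneg _) (hBG hRne.choose hRne.choose_spec)
  have hBu0 : 0 ≤ Bu := le_trans (norm_nonneg _) (hBu hRne.choose hRne.choose_spec)
  -- minimum of Re w on R
  obtain ⟨z₀, hz₀R, hmin⟩ := hRcomp.exists_isMinOn hRne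
    (Complex.continuous_re.comp_continuousOn (hwcont.mono hRU))
  set m := (wC Φ γ z₀).re with hmdef
  have hm0 : 0 < m := hwV z₀ (hRV hz₀R)
  have hsm : 0 < Real.sqrt m := Real.sqrt_pos.2 hm0
  have hulow : ∀ z ∈ R, Real.sqrt m ≤ ‖uCC Φ γ z‖ := by
    intro z hz
    have h1 : m ≤ (wC Φ γ z).re := hmin hz
    have h2 : (wC Φ γ z).re ≤ ‖wC Φ γ z‖ := by
      exact Complex.re_le_norm _
    have h3 : ‖uCC Φ γ z‖ * ‖uCC Φ γ z‖ = ‖wC Φ γ z‖ := by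
      rw [← norm_mul, husq z (hRV hz)]
    nlinarith [norm_nonneg (uCC Φ γ z), Real.sq_sqrt hm0.le, Real.sqrt_nonneg m]
  have hmmRe : ∀ z ∈ R, δ₀/2 ≤ (mmC Φ γ z).re := fun z hz => ((hRΩ hz).2).le
  have huRe : ∀ z ∈ R, 0 ≤ (uCC Φ γ z).re := fun z hz => ((hRΩ hz).1.2).le
  have hmpRe : ∀ z ∈ R, δ₀/2 ≤ (mpC Φ γ z).re := by
    intro z hz
    have h1 := huRe z hz
    have h2 : (mpC Φ γ z).re = γ/2 + (uCC Φ γ z).re := by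
      simp [mpC, Complex.add_re, Complex.ofReal_re]
    rw [h2]; linarith
  -- uniform exponential bounds
  have hexpb : ∀ t : ℝ, 0 ≤ t → ∀ μ : ℂ, δ₀/2 ≤ μ.re →
      ‖Complex.exp (-((t:ℂ) * μ))‖ ≤ Real.exp (-(δ₀ * t)/2) := by
    intro t ht μ hμ
    rw [Complex.norm_exp]
    apply Real.exp_le_exp.2
    have : (-((t:ℂ) * μ)).re = -(t * μ.re) := by
      simp [Complex.mul_re]
    rw [this]
    nlinarith
  have hmpnorm : ∀ z ∈ R, ‖mpC Φ γ z‖ ≤ γ/2 + Bu := by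
    intro z hz
    rw [mpC]
    refine (norm_add_le _ _).trans ?_
    have : ‖((γ/2 : ℝ) : ℂ)‖ = γ/2 := by
      rw [Complex.norm_real, Real.norm_eq_abs, abs_of_pos (by linarith)]
    rw [this]
    exact add_le_add le_rfl (hBu z hz)
  have hmmnorm : ∀ z ∈ R, ‖mmC Φ γ z‖ ≤ γ/2 + Bu := by
    intro z hz
    rw [mmC]
    refine (norm_sub_le _ _).trans ?_
    have : ‖((γ/2 : ℝ) : ℂ)‖ = γ/2 := by
      rw [Complex.norm_real, Real.norm_eq_abs, abs_of_pos (by linarith)]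
    rw [this]
    exact add_le_add le_rfl (hBu z hz)
  set BA1 := BG / Real.sqrt m with hBA1def
  set BA2 := (γ/2 + Bu) / Real.sqrt m with hBA2def
  have hA1bound : ∀ t : ℝ, 0 ≤ t → ∀ z ∈ R,
      ‖A1C Φ γ t z‖ ≤ BA1 * Real.exp (-(δ₀ * t)/2) := by
    intro t ht z hz
    rw [A1C, norm_div]
    have hnum : ‖GC Φ z * (Complex.exp (-((t:ℂ) * mpC Φ γ z))
        - Complex.exp (-((t:ℂ) * mmC Φ γ z)))‖ ≤ BG * (2 * Real.exp (-(δ₀ * t)/2)) := by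
      rw [norm_mul]
      apply mul_le_mul (hBG z hz) ?_ (norm_nonneg _) hBG0
      refine (norm_sub_le _ _).trans ?_
      have e1 := hexpb t ht _ (hmpRe z hz)
      have e2 := hexpb t ht _ (hmmRe z hz)
      linarith
    have hden : 2 * Real.sqrt m ≤ ‖(2 : ℂ) * uCC Φ γ z‖ := by
      rw [norm_mul]
      have : ‖(2:ℂ)‖ = 2 := by norm_num
      rw [this]
      linarith [hulow z hz]
    calc ‖GC Φ z * (Complex.exp (-((t:ℂ) * mpC Φ γ z))
          - Complex.exp (-((t:ℂ) * mmC Φ γ z)))‖ / ‖2 * uCC Φ γ z‖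
        ≤ (BG * (2 * Real.exp (-(δ₀ * t)/2))) / (2 * Real.sqrt m) :=
          div_le_div₀ (by positivity) hnum (by positivity) hden
      _ = BA1 * Real.exp (-(δ₀ * t)/2) := by
          rw [hBA1def]; field_simp
  have hA2bound : ∀ t : ℝ, 0 ≤ t → ∀ z ∈ R,
      ‖A2C Φ γ t z‖ ≤ BA2 * Real.exp (-(δ₀ * t)/2) := by
    intro t ht z hz
    rw [A2C, norm_div]
    have hnum : ‖mpC Φ γ z * Complex.exp (-((t:ℂ) * mpC Φ γ z))
        - mmC Φ γ z * Complex.exp (-((t:ℂ) * mmC Φ γ z))‖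
        ≤ (γ/2 + Bu) * (2 * Real.exp (-(δ₀ * t)/2)) := by
      refine (norm_sub_le _ _).trans ?_
      rw [norm_mul, norm_mul]
      have e1 := hexpb t ht _ (hmpRe z hz)
      have e2 := hexpb t ht _ (hmmRe z hz)
      have b1 := hmpnorm z hz
      have b2 := hmmnorm z hz
      have n1 := norm_nonneg (mpC Φ γ z)
      have n2 := norm_nonneg (mmC Φ γ z)
      have n3 := norm_nonneg (Complex.exp (-((t:ℂ) * mpC Φ γ z)))
      have n4 := norm_nonneg (Complex.exp (-((t:ℂ) * mmC Φ γ z)))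
      have hexppos := Real.exp_pos (-(δ₀ * t)/2)
      nlinarith
    have hden : 2 * Real.sqrt m ≤ ‖(2 : ℂ) * uCC Φ γ z‖ := by
      rw [norm_mul]
      have : ‖(2:ℂ)‖ = 2 := by norm_num
      rw [this]
      linarith [hulow z hz]
    calc ‖mpC Φ γ z * Complex.exp (-((t:ℂ) * mpC Φ γ z))
          - mmC Φ γ z * Complex.exp (-((t:ℂ) * mmC Φ γ z))‖ / ‖2 * uCC Φ γ z‖
        ≤ ((γ/2 + Bu) * (2 * Real.exp (-(δ₀ * t)/2))) / (2 * Real.sqrt m) :=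
          div_le_div₀ (by positivity) hnum (by positivity) hden
      _ = BA2 * Real.exp (-(δ₀ * t)/2) := by
          rw [hBA2def]; field_simp
  -- differentiability of A1C, A2C on V
  have hediff : ∀ t : ℝ, DifferentiableOn ℂ
      (fun z => Complex.exp (-((t:ℂ) * mpC Φ γ z))) V :=
    fun t => (((hmpdiff.const_mul ((t:ℂ))).neg).cexp)
  have hediff' : ∀ t : ℝ, DifferentiableOn ℂ
      (fun z => Complex.exp (-((t:ℂ) * mmC Φ γ z))) V :=
    fun t => (((hmmdiff.const_mul ((t:ℂ))).neg).cexp)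
  have hA1diff : ∀ t : ℝ, DifferentiableOn ℂ (A1C Φ γ t) V := by
    intro t
    show DifferentiableOn ℂ (fun z => GC Φ z * (Complex.exp (-((t:ℂ) * mpC Φ γ z))
      - Complex.exp (-((t:ℂ) * mmC Φ γ z))) / (2 * uCC Φ γ z)) V
    exact DifferentiableOn.div
      ((hGdiff.mono hVU).mul ((hediff t).sub (hediff' t)))
      ((differentiableOn_const _).mul hudiff)
      (fun z hz => mul_ne_zero two_ne_zero (hune z hz))
  have hA2diff : ∀ t : ℝ, DifferentiableOn ℂ (A2C Φ γ t) V := by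
    intro t
    show DifferentiableOn ℂ (fun z => (mpC Φ γ z * Complex.exp (-((t:ℂ) * mpC Φ γ z))
      - mmC Φ γ z * Complex.exp (-((t:ℂ) * mmC Φ γ z))) / (2 * uCC Φ γ z)) V
    exact DifferentiableOn.div
      ((hmpdiff.mul (hediff t)).sub (hmmdiff.mul (hediff' t)))
      ((differentiableOn_const _).mul hudiff)
      (fun z hz => mul_ne_zero two_ne_zero (hune z hz))
  -- constants
  set γ₂ := 2 * π * c with hγ₂def
  have hγ₂pos : 0 < γ₂ := by positivity
  have hBA10 : 0 ≤ BA1 := div_nonneg hBG0 hsm.le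
  have hBA20 : 0 ≤ BA2 := div_nonneg (by linarith) hsm.le
  set c₂ := max BA1 BA2 + 1 with hc₂def
  have hc₂pos : 0 < c₂ := by
    have := le_max_left BA1 BA2
    rw [hc₂def]; linarith
  refine ⟨c₂, hc₂pos, γ₂, hγ₂pos, ?_⟩
  intro t ht x
  -- choice of the shift
  set c₀ := if (0:ℤ) ≤ x then c else -c with hc₀def
  have hc₀abs : |c₀| ≤ c := by
    rw [hc₀def]; split_ifs <;> simp [abs_of_pos hc, hc.le]
  have hxc₀ : (x:ℝ) * c₀ = |(x:ℝ)| * c := by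
    rw [hc₀def]; split_ifs with h
    · rw [_root_.abs_of_nonneg (by exact_mod_cast h : (0:ℝ) ≤ (x:ℝ))]
    · rw [_root_.abs_of_neg (by exact_mod_cast not_le.1 h : (x:ℝ) < 0)]; ring
  have hexpfac : ∀ k : ℝ, ‖Complex.exp (2*(π:ℂ)*(x:ℂ)*((k:ℂ) + (c₀:ℂ) * Complex.I)
      * Complex.I)‖ = Real.exp (-(γ₂ * |(x:ℝ)|)) := by
    intro k
    rw [Complex.norm_exp]
    congr 1
    have : (2*(π:ℂ)*(x:ℂ)*((k:ℂ) + (c₀:ℂ) * Complex.I) * Complex.I).re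
        = -(2*π*(x:ℝ)*c₀) := by
      simp [Complex.mul_re, Complex.mul_im]
      try ring
    rw [this, hγ₂def]
    linear_combination (-2*π) * hxc₀
  have hexpper : ∀ z : ℂ, Complex.exp (2*(π:ℂ)*(x:ℂ)*(z+1)*Complex.I)
      = Complex.exp (2*(π:ℂ)*(x:ℂ)*z*Complex.I) := by
    intro z
    rw [show 2*(π:ℂ)*(x:ℂ)*(z+1)*Complex.I
      = 2*(π:ℂ)*(x:ℂ)*z*Complex.I + (x:ℂ)*(2*(π:ℂ)*Complex.I) by ring,
      Complex.exp_add, Complex.exp_int_mul_two_pi_mul_I, mul_one]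
  have hmemR : ∀ k : ℝ, k ∈ Set.Icc (0:ℝ) 1 → ((k:ℂ) + (c₀:ℂ) * Complex.I) ∈ R := by
    intro k hk
    rw [Complex.mem_reProdIm]
    constructor
    · simpa using hk
    · simp only [Complex.add_im, Complex.ofReal_im, Complex.mul_im, Complex.I_im,
        Complex.ofReal_re, Complex.I_re, Complex.mul_re]
      norm_num
      exact abs_le.1 hc₀abs
  have hrexp : Real.exp (-(δ₀) * t / 2 - γ₂ * |(x:ℝ)|)
      = Real.exp (-(δ₀ * t)/2) * Real.exp (-(γ₂ * |(x:ℝ)|)) := by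
    rw [← Real.exp_add]; ring_nf
  constructor
  · -- Ahat1
    set F := fun z : ℂ => Complex.exp (2*(π:ℂ)*(x:ℂ)*z*Complex.I) * A1C Φ γ t z with hFdef
    have hFdiff : DifferentiableOn ℂ F R := by
      apply DifferentiableOn.mul _ ((hA1diff t).mono hRV)
      apply Differentiable.differentiableOn
      apply Complex.differentiable_exp.comp
      exact ((differentiable_const _).mul differentiable_id).mul (differentiable_const _)
    have hFper : ∀ z, F (z + 1) = F z := by
      intro z
      rw [hFdef]
      simp only
      rw [A1C_periodic, hexpper]
    have hFline : ∀ k ∈ Set.Icc (0:ℝ) 1,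
        ‖F ((k:ℂ) + (c₀:ℝ) * Complex.I)‖
          ≤ BA1 * Real.exp (-(δ₀ * t)/2) * Real.exp (-(γ₂ * |(x:ℝ)|)) := by
      intro k hk
      rw [hFdef]
      simp only
      rw [norm_mul, hexpfac k]
      rw [mul_comm (BA1 * Real.exp (-(δ₀ * t)/2)) (Real.exp (-(γ₂ * |(x:ℝ)|)))]
      exact mul_le_mul_of_nonneg_left (hA1bound t ht _ (hmemR k hk)) (Real.exp_pos _).le
    have hmain := contour_bound hFdiff hFper hc₀abs hFline
    have hinteq : (∫ k in (0:ℝ)..1, Complex.exp (((2 * π * (x : ℝ) * k) : ℝ) * Complex.I)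
        * ((Ahat1 Φ γ t k : ℝ) : ℂ)) = ∫ k in (0:ℝ)..1, F (k:ℂ) := by
      apply intervalIntegral.integral_congr
      intro k _
      rw [hFdef]
      simp only
      rw [← A1C_real (hak k).le t]
      congr 2
      push_cast
      ring
    rw [hinteq]
    refine hmain.trans ?_
    rw [hrexp]
    have h1 : BA1 ≤ c₂ := by
      rw [hc₂def]; have := le_max_left BA1 BA2; linarith
    have e1 := Real.exp_pos (-(δ₀ * t)/2)
    have e2 := Real.exp_pos (-(γ₂ * |(x:ℝ)|))
    have key := mul_nonneg (sub_nonneg.2 h1) (mul_pos e1 e2).le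
    nlinarith [key]
  · -- Ahat2
    set F := fun z : ℂ => Complex.exp (2*(π:ℂ)*(x:ℂ)*z*Complex.I) * A2C Φ γ t z with hFdef
    have hFdiff : DifferentiableOn ℂ F R := by
      apply DifferentiableOn.mul _ ((hA2diff t).mono hRV)
      apply Differentiable.differentiableOn
      apply Complex.differentiable_exp.comp
      exact ((differentiable_const _).mul differentiable_id).mul (differentiable_const _)
    have hFper : ∀ z, F (z + 1) = F z := by
      intro z
      rw [hFdef]
      simp only
      rw [A2C_periodic, hexpper]
    have hFline : ∀ k ∈ Set.Icc (0:ℝ) 1,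
        ‖F ((k:ℂ) + (c₀:ℝ) * Complex.I)‖
          ≤ BA2 * Real.exp (-(δ₀ * t)/2) * Real.exp (-(γ₂ * |(x:ℝ)|)) := by
      intro k hk
      rw [hFdef]
      simp only
      rw [norm_mul, hexpfac k]
      rw [mul_comm (BA2 * Real.exp (-(δ₀ * t)/2)) (Real.exp (-(γ₂ * |(x:ℝ)|)))]
      exact mul_le_mul_of_nonneg_left (hA2bound t ht _ (hmemR k hk)) (Real.exp_pos _).le
    have hmain := contour_bound hFdiff hFper hc₀abs hFline
    have hinteq : (∫ k in (0:ℝ)..1, Complex.exp (((2 * π * (x : ℝ) * k) : ℝ) * Complex.I)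
        * ((Ahat2 Φ γ t k : ℝ) : ℂ)) = ∫ k in (0:ℝ)..1, F (k:ℂ) := by
      apply intervalIntegral.integral_congr
      intro k _
      rw [hFdef]
      simp only
      rw [← A2C_real (hak k).le t]
      congr 2
      push_cast
      ring
    rw [hinteq]
    refine hmain.trans ?_
    rw [hrexp]
    have h1 : BA2 ≤ c₂ := by
      rw [hc₂def]; have := le_max_right BA1 BA2; linarith
    have e1 := Real.exp_pos (-(δ₀ * t)/2)
    have e2 := Real.exp_pos (-(γ₂ * |(x:ℝ)|))
    have key := mul_nonneg (sub_nonneg.2 h1) (mul_pos e1 e2).le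
    nlinarith [key]
end
end
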